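/- arXiv:2303.06299 — 7 statements merged into one kernel-verified Lean document; each statement's English description precedes it below -/
import Mathlib

section
/- Let G be a graph and H its i-graph. A vertex X of H (corresponding to an i-set X of G) has degree at least 1 in H if and only if there exists v ∈ X and u ∈ epn(v,X) such that u dominates pn(v,X) in G. -/
open Finset

variable {V : Type*}

/-- `S` is an independent dominating (equivalently, maximal independent) set of `G`. -/
def IndepDom (G : SimpleGraph V) (S : Finset V) : Prop :=
  (∀ ⦃x⦄, x ∈ S → ∀ ⦃y⦄, y ∈ S → ¬ G.Adj x y) ∧ ∀ v, v ∉ S → ∃ u ∈ S, G.Adj u v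

/-- The independent domination number `i(G)`. -/
noncomputable def iNum (G : SimpleGraph V) : ℕ :=
  sInf {n | ∃ S : Finset V, IndepDom G S ∧ S.card = n}

/-- An `i`-set: a maximal independent set of minimum cardinality. -/
def IsISet (G : SimpleGraph V) (S : Finset V) : Prop :=
  IndepDom G S ∧ S.card = iNum G

/-- The `i`-graph of `G`: vertices are the `i`-sets of `G`, two of them adjacent iff their
symmetric difference is a pair of adjacent vertices of `G`. -/
def iGraph (G : SimpleGraph V) [DecidableEq V] : SimpleGraph {S : Finset V // IsISet G S} where
  Adj X Y := ∃ x y, G.Adj x y ∧ symmDiff X.1 Y.1 = {x, y}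
  symm := by
    constructor
    rintro X Y ⟨x, y, hxy, h⟩
    exact ⟨x, y, hxy, by rwa [symmDiff_comm]⟩
  loopless := by
    constructor
    rintro X ⟨x, y, hxy, h⟩
    rw [symmDiff_self] at h
    exact (Finset.insert_ne_empty x {y}) (by simpa [eq_comm] using h)

/-- The closed neighbourhood `N[v]` of `v`, as a set. -/
def closedNbr (G : SimpleGraph V) (v : V) : Set V := {u | u = v ∨ G.Adj v u}

/-- The private neighbourhood `pn(v,S) = N[v] − N[S − {v}]`. -/
def pn (G : SimpleGraph V) (v : V) (S : Finset V) : Set V :=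
  closedNbr G v \ ⋃ w ∈ (S : Set V) \ {v}, closedNbr G w

/-- The external private neighbourhood `epn(v,S) = pn(v,S) − {v}`. -/
def epn (G : SimpleGraph V) (v : V) (S : Finset V) : Set V := pn G v S \ {v}

lemma mem_pn_iff {G : SimpleGraph V} {v w : V} {S : Finset V} :
    w ∈ pn G v S ↔ (w = v ∨ G.Adj v w) ∧ ∀ s ∈ S, s ≠ v → ¬(w = s ∨ G.Adj s w) := by
  simp [pn, closedNbr, Set.mem_diff]

/-- Core of the forward direction. -/
lemma forward_core [DecidableEq V] {G : SimpleGraph V} {X Y : Finset V}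
    (hXi : IsISet G X) (hYi : IsISet G Y) {x y : V}
    (hadj : G.Adj x y) (hsd : symmDiff X Y = {x, y}) (hxX : x ∈ X) (hxY : x ∉ Y) :
    ∃ v ∈ X, ∃ u ∈ epn G v X, ∀ w ∈ pn G v X, w ∈ closedNbr G u := by
  have hxy : x ≠ y := hadj.ne
  have hcard : X.card = Y.card := hYi.2 ▸ hXi.2
  have hmemsd : ∀ z, z ∈ symmDiff X Y ↔ (z ∈ X ∧ z ∉ Y) ∨ (z ∈ Y ∧ z ∉ X) := by
    intro z; simp [symmDiff_def, Finset.mem_union, Finset.mem_sdiff]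
  -- y ∈ Y \ X
  have hy : y ∈ Y ∧ y ∉ X := by
    have hy' := (hmemsd y).1 (by rw [hsd]; simp)
    rcases hy' with ⟨hyX, hyY⟩ | h
    · -- then Y \ X = ∅, contradiction with x ∈ X \ Y and equal cards
      exfalso
      have hYX : Y \ X = ∅ := by
        rw [Finset.eq_empty_iff_forall_notMem]
        intro z hz
        rw [Finset.mem_sdiff] at hz
        have : z ∈ symmDiff X Y := (hmemsd z).2 (Or.inr ⟨hz.1, hz.2⟩)
        rw [hsd] at this
        rcases Finset.mem_insert.1 this with rfl | h'
        · exact hz.2 hxX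
        · rw [Finset.mem_singleton] at h'; subst h'; exact hz.2 hyX
      have h1 : (X \ Y).card = (Y \ X).card := Finset.card_sdiff_comm hcard
      rw [hYX, Finset.card_empty, Finset.card_eq_zero,
        Finset.eq_empty_iff_forall_notMem] at h1
      exact h1 x (Finset.mem_sdiff.2 ⟨hxX, hxY⟩)
    · exact h
  -- X \ {x} ⊆ Y
  have hXsubY : ∀ z ∈ X, z ≠ x → z ∈ Y := by
    intro z hzX hzx
    by_contra hzY
    have : z ∈ symmDiff X Y := (hmemsd z).2 (Or.inl ⟨hzX, hzY⟩)
    rw [hsd] at this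
    rcases Finset.mem_insert.1 this with rfl | h'
    · exact hzx rfl
    · rw [Finset.mem_singleton] at h'; subst h'; exact hy.2 hzX
  -- elements of Y
  have hYmem : ∀ s ∈ Y, s = y ∨ (s ∈ X ∧ s ≠ x) := by
    intro s hsY
    by_cases hsX : s ∈ X
    · exact Or.inr ⟨hsX, fun h => hxY (h ▸ hsY)⟩
    · have : s ∈ symmDiff X Y := (hmemsd s).2 (Or.inr ⟨hsY, hsX⟩)
      rw [hsd] at this
      rcases Finset.mem_insert.1 this with rfl | h'
      · exact absurd hxX hsX
      · rw [Finset.mem_singleton] at h'; exact Or.inl h'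
  refine ⟨x, hxX, y, ⟨?_, fun h => hxy (Set.eq_of_mem_singleton h).symm⟩, ?_⟩
  · -- y ∈ pn G x X
    rw [mem_pn_iff]
    refine ⟨Or.inr hadj, fun s hsX hsx h => ?_⟩
    have hsY : s ∈ Y := hXsubY s hsX hsx
    rcases h with rfl | h
    · exact hy.2 hsX
    · exact hYi.1.1 hsY hy.1 h
  · -- y dominates pn G x X
    intro w hw
    rw [mem_pn_iff] at hw
    by_cases hwY : w ∈ Y
    · rcases hYmem w hwY with rfl | ⟨hwX, hwx⟩
      · exact Or.inl rfl
      · exact absurd (Or.inl rfl) (hw.2 w hwX hwx)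
    · obtain ⟨s, hsY, hs⟩ := hYi.1.2 w hwY
      rcases hYmem s hsY with rfl | ⟨hsX, hsx⟩
      · exact Or.inr hs
      · exact absurd (Or.inr hs) (hw.2 s hsX hsx)

/-- A vertex `X` of the `i`-graph of `G` has degree at least 1 (i.e. has a neighbour) iff
for some `v ∈ X` there exists `u ∈ epn(v,X)` such that `u` dominates `pn(v,X)`. -/
theorem iGraph_degree_pos_iff {V : Type*} [Fintype V] [DecidableEq V] (G : SimpleGraph V)
    (X : {S : Finset V // IsISet G S}) :
    ((iGraph G).neighborSet X).Nonempty ↔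
      ∃ v ∈ X.1, ∃ u ∈ epn G v X.1, ∀ w ∈ pn G v X.1, w ∈ closedNbr G u := by
  constructor
  · rintro ⟨Y, x, y, hadj, hsd⟩
    have hx : x ∈ symmDiff X.1 Y.1 := by rw [hsd]; simp
    rw [symmDiff_def] at hx
    rcases Finset.mem_union.1 hx with hx | hx
    · rw [Finset.mem_sdiff] at hx
      exact forward_core X.2 Y.2 hadj hsd hx.1 hx.2
    · -- then y ∈ X \ Y (else X = Y as in core; handle by symmetry swapping x,y)
      rw [Finset.mem_sdiff] at hx
      have hy : y ∈ X.1 ∧ y ∉ Y.1 := by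
        by_contra h
        push_neg at h
        -- show y ∉ X.1 leads to contradiction: X ⊆ Y
        have hysd : y ∈ symmDiff X.1 Y.1 := by rw [hsd]; simp
        rw [symmDiff_def, Finset.sup_eq_union, Finset.mem_union, Finset.mem_sdiff, Finset.mem_sdiff] at hysd
        have hyYX : y ∈ Y.1 ∧ y ∉ X.1 := by
          rcases hysd with h' | h'
          · exact absurd h'.2 (not_not.2 (h h'.1))
          · exact h'
        -- both x,y ∈ Y \ X: then X \ Y = ∅, card contradiction
        have hXY : X.1 \ Y.1 = ∅ := by
          rw [Finset.eq_empty_iff_forall_notMem]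
          intro z hz
          rw [Finset.mem_sdiff] at hz
          have : z ∈ symmDiff X.1 Y.1 := by
            rw [symmDiff_def, Finset.sup_eq_union]
            exact Finset.mem_union_left _ (Finset.mem_sdiff.2 hz)
          rw [hsd] at this
          rcases Finset.mem_insert.1 this with rfl | h'
          · exact hx.2 hz.1
          · rw [Finset.mem_singleton] at h'; subst h'; exact hyYX.2 hz.1
        have hcard : X.1.card = Y.1.card := Y.2.2 ▸ X.2.2
        have h1 : (Y.1 \ X.1).card = (X.1 \ Y.1).card := Finset.card_sdiff_comm hcard.symm
        rw [hXY, Finset.card_empty, Finset.card_eq_zero,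
          Finset.eq_empty_iff_forall_notMem] at h1
        exact h1 x (Finset.mem_sdiff.2 ⟨hx.1, hx.2⟩)
      have hsd' : symmDiff X.1 Y.1 = {y, x} := by rw [hsd, Finset.pair_comm]
      exact forward_core X.2 Y.2 hadj.symm hsd' hy.1 hy.2
  · rintro ⟨v, hvX, u, ⟨hupn, huv⟩, hdom⟩
    rw [mem_pn_iff] at hupn
    have huv' : u ≠ v := by simpa using huv
    have hadj : G.Adj v u := by
      rcases hupn.1 with h | h
      · exact absurd h huv'
      · exact h
    have huX : u ∉ X.1 := fun h => (hupn.2 u h huv') (Or.inl rfl)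
    set Y : Finset V := insert u (X.1.erase v) with hYdef
    have hXind := X.2.1.1
    have hXdom := X.2.1.2
    have hYmem : ∀ s, s ∈ Y ↔ s = u ∨ (s ∈ X.1 ∧ s ≠ v) := by
      intro s; simp [hYdef, Finset.mem_insert, Finset.mem_erase, and_comm]
    -- Y independent
    have hYind : ∀ ⦃a⦄, a ∈ Y → ∀ ⦃b⦄, b ∈ Y → ¬ G.Adj a b := by
      intro a ha b hb hab
      rcases (hYmem a).1 ha with rfl | ⟨haX, hav⟩
      · rcases (hYmem b).1 hb with rfl | ⟨hbX, hbv⟩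
        · exact G.loopless.irrefl _ hab
        · exact (hupn.2 b hbX hbv) (Or.inr hab.symm)
      · rcases (hYmem b).1 hb with rfl | ⟨hbX, hbv⟩
        · exact (hupn.2 a haX hav) (Or.inr hab)
        · exact hXind haX hbX hab
    -- Y dominating
    have hYdom : ∀ w, w ∉ Y → ∃ s ∈ Y, G.Adj s w := by
      intro w hwY
      by_cases hwv : w = v
      · exact ⟨u, (hYmem u).2 (Or.inl rfl), hwv ▸ hadj.symm⟩
      · have hwX : w ∉ X.1 := fun h => hwY ((hYmem w).2 (Or.inr ⟨h, hwv⟩))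
        by_cases hpriv : ∃ s ∈ X.1, s ≠ v ∧ G.Adj s w
        · obtain ⟨s, hsX, hsv, hs⟩ := hpriv
          exact ⟨s, (hYmem s).2 (Or.inr ⟨hsX, hsv⟩), hs⟩
        · push_neg at hpriv
          obtain ⟨s, hsX, hs⟩ := hXdom w hwX
          have hsv : s = v := by
            by_contra h
            exact (hpriv s hsX h) hs
          subst hsv
          -- w ∈ pn G s X
          have hwpn : w ∈ pn G s X.1 := by
            rw [mem_pn_iff]
            refine ⟨Or.inr hs, fun t htX htv h => ?_⟩
            rcases h with rfl | h
            · exact hwX htX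
            · exact (hpriv t htX htv) h
          rcases (show w = u ∨ G.Adj u w from hdom w hwpn) with h | h
          · exact absurd ((hYmem w).2 (Or.inl h)) hwY
          · exact ⟨u, (hYmem u).2 (Or.inl rfl), h⟩
    -- card Y = iNum G
    have hYcard : Y.card = iNum G := by
      rw [hYdef, Finset.card_insert_of_notMem (fun h => huX (Finset.mem_of_mem_erase h)),
        Finset.card_erase_add_one hvX]
      exact X.2.2
    have hYiset : IsISet G Y := ⟨⟨hYind, hYdom⟩, hYcard⟩
    refine ⟨⟨Y, hYiset⟩, v, u, hadj, ?_⟩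
    -- symmDiff X Y = {v, u}
    ext a
    rw [symmDiff_def, Finset.sup_eq_union, Finset.mem_union, Finset.mem_sdiff,
      Finset.mem_sdiff]
    show (a ∈ X.1 ∧ a ∉ Y) ∨ (a ∈ Y ∧ a ∉ X.1) ↔ _
    rw [hYmem a, Finset.mem_insert, Finset.mem_singleton]
    constructor
    · rintro (⟨haX, ha⟩ | ⟨(rfl | ⟨haX, hav⟩), ha'⟩)
      · push_neg at ha
        exact Or.inl (ha.2 haX)
      · exact Or.inr rfl
      · exact absurd haX ha'
    · rintro (rfl | rfl)
      · exact Or.inl ⟨hvX, by push_neg; exact ⟨fun h => huv' h.symm, fun _ => rfl⟩⟩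
      · exact Or.inr ⟨Or.inl rfl, huX⟩
end

section
/- Let G be a graph with i-graph H. Suppose XY and YZ are edges of H with the token slides X → Y replacing x by y₁ (so Y = (X \ {x}) ∪ {y₁}) and Y → Z replacing y₂ by z (so Z = (Y \ {y₂}) ∪ {z}), and X ≠ Z. Then XZ is an edge of H if and only if y₁ = y₂. -/
open Finset

variable {V : Type*}

/-- If `X → Y` slides token `x` to `y₁` and `Y → Z` slides token `y₂` to `z`, with `X ≠ Z`,
then `XZ` is an edge of the `i`-graph iff `y₁ = y₂`. -/
theorem iGraph_triangle_iff {V : Type*} [Fintype V] [DecidableEq V] (G : SimpleGraph V)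
    (X Y Z : {S : Finset V // IsISet G S}) (x y₁ y₂ z : V)
    (hXY : (iGraph G).Adj X Y) (hYZ : (iGraph G).Adj Y Z)
    (hx : x ∈ X.1) (hxy : G.Adj x y₁) (hY : Y.1 = insert y₁ (X.1.erase x))
    (hy₂ : y₂ ∈ Y.1) (hyz : G.Adj y₂ z) (hZ : Z.1 = insert z (Y.1.erase y₂))
    (hXZ : X ≠ Z) :
    (iGraph G).Adj X Z ↔ y₁ = y₂ := by

  obtain ⟨⟨hXind, hXdom⟩, -⟩ := X.2
  obtain ⟨⟨hYind, hYdom⟩, -⟩ := Y.2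
  obtain ⟨⟨hZind, hZdom⟩, -⟩ := Z.2
  have hxney₁ : x ≠ y₁ := hxy.ne
  have hy₁X : y₁ ∉ X.1 := fun h => hXind hx h hxy
  have hy₁Y : y₁ ∈ Y.1 := by rw [hY]; exact mem_insert_self _ _
  have hzY : z ∉ Y.1 := fun h => hYind hy₂ h hyz
  constructor
  · intro hAdj
    by_contra hne
    obtain ⟨a, b, hab, hsd⟩ := hAdj
    have hy₂X : y₂ ∈ X.1 := by
      have h := hy₂
      rw [hY, mem_insert] at h
      rcases h with h | h
      · exact absurd h.symm hne
      · exact mem_of_mem_erase h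
    have hy₁Z : y₁ ∈ Z.1 := by
      rw [hZ]; exact mem_insert_of_mem (mem_erase.2 ⟨hne, hy₁Y⟩)
    have hy₂Z : y₂ ∉ Z.1 := by
      rw [hZ, mem_insert]
      rintro (h | h)
      · exact hyz.ne h
      · exact (mem_erase.1 h).1 rfl
    have h1 : y₁ ∈ ({a, b} : Finset V) := by
      rw [← hsd]; exact Finset.mem_symmDiff.2 (Or.inr ⟨hy₁Z, hy₁X⟩)
    have h2 : y₂ ∈ ({a, b} : Finset V) := by
      rw [← hsd]; exact Finset.mem_symmDiff.2 (Or.inl ⟨hy₂X, hy₂Z⟩)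
    simp only [mem_insert, mem_singleton] at h1 h2
    rcases h1 with rfl | rfl <;> rcases h2 with rfl | rfl
    · exact hne rfl
    · exact hYind hy₁Y hy₂ hab
    · exact hYind hy₂ hy₁Y hab
    · exact hne rfl
  · intro hy
    subst hy
    have hZ' : Z.1 = insert z (X.1.erase x) := by
      rw [hZ, hY, erase_insert (fun h => hy₁X (mem_of_mem_erase h))]
    have hzx : z ≠ x := by
      intro h
      subst h
      exact hXZ (Subtype.ext (by rw [hZ', insert_erase hx]))
    have hzX : z ∉ X.1 := fun h =>
      hzY (by rw [hY]; exact mem_insert_of_mem (mem_erase.2 ⟨hzx, h⟩))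
    have hzZ : z ∈ Z.1 := by rw [hZ']; exact mem_insert_self _ _
    have hAdjxz : G.Adj x z := by
      obtain ⟨u, hu, huz⟩ := hXdom z hzX
      rcases eq_or_ne u x with rfl | hux
      · exact huz
      · have huZ : u ∈ Z.1 := by
          rw [hZ']; exact mem_insert_of_mem (mem_erase.2 ⟨hux, hu⟩)
        exact absurd huz (hZind huZ hzZ)
    refine ⟨x, z, hAdjxz, ?_⟩
    ext w
    simp only [Finset.mem_symmDiff, hZ', mem_insert, mem_erase, mem_singleton]
    constructor
    · rintro (⟨hw, h2⟩ | ⟨h1, hw⟩)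
      · push_neg at h2
        exact Or.inl (by_contra fun hwx => absurd hw ((h2.2 hwx)))
      · rcases h1 with rfl | ⟨_, hwX⟩
        · exact Or.inr rfl
        · exact absurd hwX hw
    · rintro (rfl | rfl)
      · exact Or.inl ⟨hx, by push_neg; exact ⟨hzx.symm, fun h => absurd rfl h⟩⟩
      · exact Or.inr ⟨Or.inl rfl, hzX⟩
end

section
/- Let G be a graph with i-graph H, and suppose H contains an induced star K_{1,m} centered at vertex X with leaves Y₁,…,Y_m, where deg_H(X) = m. Then for i ≠ j: (i) X − Y_i ≠ X − Y_j; (ii) |Y_i ∩ Y_j| = i(G) − 2; and (iii) m ≤ i(G). -/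
open Finset

variable {V : Type*}

lemma mem_of_diffs [DecidableEq V] {X Y : Finset V} {x y : V}
    (h1 : X \ Y = {x}) (h2 : Y \ X = {y}) (v : V) :
    v ∈ Y ↔ v = y ∨ (v ∈ X ∧ v ≠ x) := by
  have hx : x ∈ X \ Y := h1 ▸ Finset.mem_singleton_self x
  have hy : y ∈ Y \ X := h2 ▸ Finset.mem_singleton_self y
  rw [Finset.mem_sdiff] at hx hy
  constructor
  · intro hv
    by_cases hvX : v ∈ X
    · right
      refine ⟨hvX, ?_⟩
      rintro rfl
      exact hx.2 hv
    · left
      have : v ∈ Y \ X := Finset.mem_sdiff.mpr ⟨hv, hvX⟩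
      rw [h2] at this
      exact Finset.mem_singleton.mp this
  · rintro (rfl | ⟨hvX, hvx⟩)
    · exact hy.1
    · by_contra hvY
      have : v ∈ X \ Y := Finset.mem_sdiff.mpr ⟨hvX, hvY⟩
      rw [h1] at this
      exact hvx (Finset.mem_singleton.mp this)

lemma adj_struct {G : SimpleGraph V} [DecidableEq V] {X Y : Finset V}
    (hcard : X.card = Y.card)
    (h : ∃ x y, G.Adj x y ∧ symmDiff X Y = {x, y}) :
    ∃ x y, G.Adj x y ∧ x ∈ X ∧ x ∉ Y ∧ y ∈ Y ∧ y ∉ X ∧ X \ Y = {x} ∧ Y \ X = {y} := by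
  obtain ⟨x, y, hxy, hs⟩ := h
  have hne : x ≠ y := hxy.ne
  have hmem : ∀ v, v ∈ symmDiff X Y ↔ (v = x ∨ v = y) := by
    intro v; rw [hs]; simp
  have hx := (hmem x).mpr (Or.inl rfl)
  have hy := (hmem y).mpr (Or.inr rfl)
  rw [Finset.mem_symmDiff] at hx hy
  have key : ∀ a b : V, G.Adj a b → (∀ v, v ∈ symmDiff X Y ↔ (v = a ∨ v = b)) →
      a ∈ X ∧ a ∉ Y → b ∈ Y ∧ b ∉ X →
      ∃ x y, G.Adj x y ∧ x ∈ X ∧ x ∉ Y ∧ y ∈ Y ∧ y ∉ X ∧ X \ Y = {x} ∧ Y \ X = {y} := by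
    intro a b hab hm ⟨haX, haY⟩ ⟨hbY, hbX⟩
    refine ⟨a, b, hab, haX, haY, hbY, hbX, ?_, ?_⟩
    · ext v
      rw [Finset.mem_sdiff, Finset.mem_singleton]
      constructor
      · intro ⟨h1, h2⟩
        rcases (hm v).mp (Finset.mem_symmDiff.mpr (Or.inl ⟨h1, h2⟩)) with rfl | rfl
        · rfl
        · exact absurd h1 hbX
      · rintro rfl; exact ⟨haX, haY⟩
    · ext v
      rw [Finset.mem_sdiff, Finset.mem_singleton]
      constructor
      · intro ⟨h1, h2⟩
        rcases (hm v).mp (Finset.mem_symmDiff.mpr (Or.inr ⟨h1, h2⟩)) with rfl | rfl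
        · exact absurd h1 haY
        · rfl
      · rintro rfl; exact ⟨hbY, hbX⟩
  have notboth : ¬ ((x ∈ X ∧ x ∉ Y) ∧ (y ∈ X ∧ y ∉ Y)) := by
    rintro ⟨⟨hxX, hxY⟩, ⟨hyX, hyY⟩⟩
    have hYX : Y ⊆ X := by
      intro v hv
      by_contra hvX
      rcases (hmem v).mp (Finset.mem_symmDiff.mpr (Or.inr ⟨hv, hvX⟩)) with rfl | rfl
      · exact hvX hxX
      · exact hvX hyX
    have : X = Y := (Finset.eq_of_subset_of_card_le hYX hcard.le).symm
    subst this
    rw [symmDiff_self] at hs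
    have : x ∈ (⊥ : Finset V) := hs ▸ Finset.mem_insert_self x {y}
    simp at this
  have notboth' : ¬ ((x ∈ Y ∧ x ∉ X) ∧ (y ∈ Y ∧ y ∉ X)) := by
    rintro ⟨⟨hxY, hxX⟩, ⟨hyY, hyX⟩⟩
    have hXY : X ⊆ Y := by
      intro v hv
      by_contra hvY
      rcases (hmem v).mp (Finset.mem_symmDiff.mpr (Or.inl ⟨hv, hvY⟩)) with rfl | rfl
      · exact hvY hxY
      · exact hvY hyY
    have : X = Y := Finset.eq_of_subset_of_card_le hXY hcard.ge
    subst this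
    rw [symmDiff_self] at hs
    have : x ∈ (⊥ : Finset V) := hs ▸ Finset.mem_insert_self x {y}
    simp at this
  rcases hx with hx | hx
  · rcases hy with hy | hy
    · exact absurd ⟨hx, hy⟩ notboth
    · exact key x y hxy hmem hx hy
  · rcases hy with hy | hy
    · exact key y x hxy.symm (fun v => (hmem v).trans or_comm) hy hx
    · exact absurd ⟨hx, hy⟩ notboth'

/-- If the `i`-graph of `G` contains an induced star `K_{1,m}` centered at `X` with leaves
`Y₁, …, Y_m` and `deg X = m`, then the removed vertices are pairwise distinct, any two leaves
intersect in `i(G) − 2` vertices, and `m ≤ i(G)`. -/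
theorem iGraph_induced_star {V : Type*} [Fintype V] [DecidableEq V] (G : SimpleGraph V)
    (m : ℕ) (X : {S : Finset V // IsISet G S}) (Y : Fin m → {S : Finset V // IsISet G S})
    (hinj : Function.Injective Y)
    (hadj : ∀ i, (iGraph G).Adj X (Y i))
    (hind : ∀ i j, i ≠ j → ¬ (iGraph G).Adj (Y i) (Y j))
    (hdeg : ∀ W, (iGraph G).Adj X W → ∃ i, W = Y i) :
    (∀ i j, i ≠ j → X.1 \ (Y i).1 ≠ X.1 \ (Y j).1) ∧
    (∀ i j, i ≠ j → ((Y i).1 ∩ (Y j).1).card = iNum G - 2) ∧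
    m ≤ iNum G := by
  classical
  have hstruct : ∀ i, ∃ x y, G.Adj x y ∧ x ∈ X.1 ∧ x ∉ (Y i).1 ∧ y ∈ (Y i).1 ∧ y ∉ X.1 ∧
      X.1 \ (Y i).1 = {x} ∧ (Y i).1 \ X.1 = {y} :=
    fun i => adj_struct (X.2.2.trans (Y i).2.2.symm) (hadj i)
  choose xs ys hG hxX hxY hyY hyX hXd hYd using hstruct
  have hyne : ∀ i j, i ≠ j → xs i = xs j → ys i ≠ ys j := by
    intro i j hij hx hy
    apply hij
    apply hinj
    apply Subtype.ext
    ext v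
    rw [mem_of_diffs (hXd i) (hYd i), mem_of_diffs (hXd j) (hYd j), hx, hy]
  have hxne : ∀ i j, i ≠ j → xs i ≠ xs j := by
    intro i j hij hx
    have hy := hyne i j hij hx
    have hyij : ys i ∉ (Y j).1 := by
      rw [mem_of_diffs (hXd j) (hYd j)]
      push_neg
      exact ⟨hy, fun h => absurd h (hyX i)⟩
    have hGy : ¬ G.Adj (ys i) (ys j) := by
      intro hadj'
      apply hind i j hij
      refine ⟨ys i, ys j, hadj', ?_⟩
      ext v
      rw [Finset.mem_symmDiff]
      rw [show (v ∈ (Y i).1 ∧ v ∉ (Y j).1 ∨ v ∈ (Y j).1 ∧ v ∉ (Y i).1) ↔ _ from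
        Iff.rfl]
      rw [mem_of_diffs (hXd i) (hYd i), mem_of_diffs (hXd j) (hYd j), hx]
      have h1 := hyX i
      have h2 := hyX j
      simp only [Finset.mem_insert, Finset.mem_singleton]
      constructor
      · rintro (⟨(rfl | ⟨hvX, hvx⟩), hn⟩ | ⟨(rfl | ⟨hvX, hvx⟩), hn⟩)
        · exact Or.inl rfl
        · exact absurd (Or.inr ⟨hvX, hvx⟩) hn
        · exact Or.inr rfl
        · exact absurd (Or.inr ⟨hvX, hvx⟩) hn
      · rintro (rfl | rfl)
        · left
          refine ⟨Or.inl rfl, ?_⟩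
          rintro (h | ⟨hvX, _⟩)
          · exact hy h
          · exact h1 hvX
        · right
          refine ⟨Or.inl rfl, ?_⟩
          rintro (h | ⟨hvX, _⟩)
          · exact hy h.symm
          · exact h2 hvX
    obtain ⟨u, huY, huA⟩ := (Y j).2.1.2 (ys i) hyij
    rw [mem_of_diffs (hXd j) (hYd j)] at huY
    rcases huY with rfl | ⟨huX, hux⟩
    · exact hGy huA.symm
    · have huYi : u ∈ (Y i).1 := by
        rw [mem_of_diffs (hXd i) (hYd i)]
        exact Or.inr ⟨huX, hx ▸ hux⟩
      exact (Y i).2.1.1 huYi (hyY i) huA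
  have hyne' : ∀ i j, i ≠ j → ys i ≠ ys j := by
    intro i j hij hy
    have hx := hxne i j hij
    have hxjYi : xs j ∈ (Y i).1 := by
      rw [mem_of_diffs (hXd i) (hYd i)]
      exact Or.inr ⟨hxX j, hx.symm⟩
    have : G.Adj (xs j) (ys i) := by rw [hy]; exact hG j
    exact (Y i).2.1.1 hxjYi (hyY i) this
  refine ⟨?_, ?_, ?_⟩
  · intro i j hij h
    rw [hXd i, hXd j] at h
    exact hxne i j hij (Finset.singleton_inj.mp h)
  · intro i j hij
    have hIJ : (Y i).1 ∩ (Y j).1 = (X.1.erase (xs i)).erase (xs j) := by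
      ext v
      rw [Finset.mem_inter, mem_of_diffs (hXd i) (hYd i), mem_of_diffs (hXd j) (hYd j),
        Finset.mem_erase, Finset.mem_erase]
      constructor
      · rintro ⟨(rfl | ⟨h1, h2⟩), (heq | ⟨h3, h4⟩)⟩
        · exact absurd heq (hyne' i j hij)
        · exact absurd h3 (hyX i)
        · exact absurd (heq ▸ h1) (hyX j)
        · exact ⟨h4, h2, h1⟩
      · rintro ⟨h1, h2, h3⟩
        exact ⟨Or.inr ⟨h3, h2⟩, Or.inr ⟨h3, h1⟩⟩
    rw [hIJ, Finset.card_erase_of_mem, Finset.card_erase_of_mem (hxX i), X.2.2]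
    · omega
    · exact Finset.mem_erase.mpr ⟨(hxne i j hij).symm, hxX j⟩
  · have h := Finset.card_le_card_of_injOn (s := Finset.univ) xs (fun i _ => hxX i)
      (fun i _ j _ h => by
        by_contra hij
        exact hxne i j hij h)
    simpa [X.2.2] using h
end

section
/- There is no graph G whose i-graph is isomorphic to the complete bipartite graph K_{2,3}. -/
open Finset

variable {V : Type*}

section Aux
variable [DecidableEq V] {G : SimpleGraph V}

lemma IsISet.card_eq' {X Y : Finset V} (hX : IsISet G X) (hY : IsISet G Y) :
    X.card = Y.card := hX.2.trans hY.2.symm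

lemma card_symmDiff' (X Y : Finset V) :
    (symmDiff X Y).card = (X \ Y).card + (Y \ X).card := by
  rw [symmDiff_def, Finset.sup_eq_union]
  exact card_union_of_disjoint disjoint_sdiff_sdiff

lemma adj_of_small {X Y : Finset V} (hX : IsISet G X) (hY : IsISet G Y) {u v : V}
    (hu : X \ Y = {u}) (hv : Y \ X = {v}) : G.Adj u v := by
  have hvY : v ∈ Y \ X := hv ▸ mem_singleton_self v
  obtain ⟨a, haX, hav⟩ := hX.1.2 v (mem_sdiff.mp hvY).2
  rcases eq_or_ne a u with rfl | hne
  · exact hav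
  · exfalso
    have haY : a ∈ Y := by
      by_contra haY
      have : a ∈ X \ Y := mem_sdiff.mpr ⟨haX, haY⟩
      rw [hu, mem_singleton] at this; exact hne this
    exact hY.1.1 haY (mem_sdiff.mp hvY).1 hav

lemma two_le_of_not_adj {X Y : Finset V} (hX : IsISet G X) (hY : IsISet G Y)
    (hne : X ≠ Y) (hnadj : ¬ (iGraph G).Adj ⟨X, hX⟩ ⟨Y, hY⟩) :
    2 ≤ (X \ Y).card := by
  have hcard : (X \ Y).card = (Y \ X).card := card_sdiff_comm (hX.card_eq' hY)
  by_contra h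
  push_neg at h
  interval_cases hc : (X \ Y).card
  · have h0 : X \ Y = ∅ := card_eq_zero.mp hc
    exact hne (eq_of_subset_of_card_le (sdiff_eq_empty_iff_subset.mp h0)
      (le_of_eq (hY.card_eq' hX)))
  · obtain ⟨u, hu⟩ := card_eq_one.mp hc
    obtain ⟨v, hv⟩ := card_eq_one.mp (show (Y \ X).card = 1 by omega)
    have hadj : G.Adj u v := adj_of_small hX hY hu hv
    apply hnadj
    refine ⟨u, v, hadj, ?_⟩
    show symmDiff X Y = {u, v}
    rw [symmDiff_def, Finset.sup_eq_union, hu, hv]; rfl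

lemma sd_decomp {X Y Z : Finset V}
    (h4 : 4 ≤ (symmDiff X Y).card)
    (h1 : (symmDiff X Z).card = 2) (h2 : (symmDiff Z Y).card = 2) :
    Disjoint (symmDiff X Z) (symmDiff Z Y) ∧
      symmDiff X Y = symmDiff X Z ∪ symmDiff Z Y := by
  have hsub : symmDiff X Y ⊆ symmDiff X Z ∪ symmDiff Z Y := by
    intro a ha
    simp only [Finset.mem_union, Finset.mem_symmDiff] at *
    tauto
  have h4' : 4 ≤ (symmDiff X Z ∪ symmDiff Z Y).card := le_trans h4 (card_le_card hsub)
  have hle : (symmDiff X Z ∪ symmDiff Z Y).card ≤ 4 := by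
    calc (symmDiff X Z ∪ symmDiff Z Y).card ≤ (symmDiff X Z).card + (symmDiff Z Y).card :=
        card_union_le _ _
      _ = 4 := by rw [h1, h2]
  have hEq4 : (symmDiff X Z ∪ symmDiff Z Y).card = 4 := le_antisymm hle h4'
  have hint : (symmDiff X Z ∩ symmDiff Z Y).card = 0 := by
    have := Finset.card_union_add_card_inter (symmDiff X Z) (symmDiff Z Y)
    omega
  refine ⟨?_, eq_of_subset_of_card_le hsub (by omega)⟩
  rw [Finset.disjoint_iff_inter_eq_empty]
  exact card_eq_zero.mp hint

lemma core (G : SimpleGraph V)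
    {A B C D E : Finset V}
    (hA : IsISet G A) (hB : IsISet G B) (hC : IsISet G C)
    (hD : IsISet G D) (hE : IsISet G E)
    (neAB : A ≠ B) (neCD : C ≠ D) (neCE : C ≠ E) (neDE : D ≠ E)
    (nAB : ¬ (iGraph G).Adj ⟨A, hA⟩ ⟨B, hB⟩)
    (nCD : ¬ (iGraph G).Adj ⟨C, hC⟩ ⟨D, hD⟩)
    (nCE : ¬ (iGraph G).Adj ⟨C, hC⟩ ⟨E, hE⟩)
    (nDE : ¬ (iGraph G).Adj ⟨D, hD⟩ ⟨E, hE⟩)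
    (aAC : (iGraph G).Adj ⟨A, hA⟩ ⟨C, hC⟩)
    (aAD : (iGraph G).Adj ⟨A, hA⟩ ⟨D, hD⟩)
    (aAE : (iGraph G).Adj ⟨A, hA⟩ ⟨E, hE⟩)
    (aBC : (iGraph G).Adj ⟨B, hB⟩ ⟨C, hC⟩)
    (aBD : (iGraph G).Adj ⟨B, hB⟩ ⟨D, hD⟩)
    (aBE : (iGraph G).Adj ⟨B, hB⟩ ⟨E, hE⟩) : False := by
  have hcard2 : ∀ {X Y : Finset V}, (∃ x y, G.Adj x y ∧ symmDiff X Y = {x, y}) →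
      (symmDiff X Y).card = 2 := by
    rintro X Y ⟨x, y, hxy, h⟩
    rw [h, card_insert_of_notMem (by simp [hxy.ne]), card_singleton]
  have cAC : (symmDiff A C).card = 2 := hcard2 aAC
  have cAD : (symmDiff A D).card = 2 := hcard2 aAD
  have cAE : (symmDiff A E).card = 2 := hcard2 aAE
  have cBC : (symmDiff B C).card = 2 := hcard2 aBC
  have cBD : (symmDiff B D).card = 2 := hcard2 aBD
  have cBE : (symmDiff B E).card = 2 := hcard2 aBE
  have cCA : (symmDiff C A).card = 2 := by rwa [symmDiff_comm]
  have cDA : (symmDiff D A).card = 2 := by rwa [symmDiff_comm]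
  have cCB : (symmDiff C B).card = 2 := by rwa [symmDiff_comm]
  have cDB : (symmDiff D B).card = 2 := by rwa [symmDiff_comm]
  have cEB : (symmDiff E B).card = 2 := by rwa [symmDiff_comm]
  have big : ∀ {X Y : Finset V} (hX : IsISet G X) (hY : IsISet G Y), X ≠ Y →
      ¬ (iGraph G).Adj ⟨X, hX⟩ ⟨Y, hY⟩ → 4 ≤ (symmDiff X Y).card := by
    intro X Y hX hY hne hn
    have h2 := two_le_of_not_adj hX hY hne hn
    have h3 := card_sdiff_comm (hX.card_eq' hY)
    rw [card_symmDiff']; omega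
  have bAB := big hA hB neAB nAB
  have bCD := big hC hD neCD nCD
  have bCE := big hC hE neCE nCE
  have bDE := big hD hE neDE nDE
  obtain ⟨dCD, -⟩ := sd_decomp bCD cCA cAD
  obtain ⟨dCE, -⟩ := sd_decomp bCE cCA cAE
  obtain ⟨dDE, -⟩ := sd_decomp bDE cDA cAE
  obtain ⟨-, uC⟩ := sd_decomp bAB cAC cCB
  obtain ⟨-, uD⟩ := sd_decomp bAB cAD cDB
  obtain ⟨-, uE⟩ := sd_decomp bAB cAE cEB
  have hAB2 : (A \ B).card = 2 := by
    have h := card_symmDiff' A B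
    have hc := card_sdiff_comm (hA.card_eq' hB)
    have hle : (symmDiff A B).card ≤ 4 := by
      rw [uC]
      calc (symmDiff A C ∪ symmDiff C B).card ≤ (symmDiff A C).card + (symmDiff C B).card :=
          card_union_le _ _
        _ = 4 := by rw [cAC, cCB]
    omega
  have getA : ∀ {X : Finset V}, (symmDiff A X).card = 2 → A.card = X.card →
      ∃ a, A \ X = {a} := by
    intro X h2 hcardeq
    have hc := card_sdiff_comm hcardeq
    have hs := card_symmDiff' A X
    have : (A \ X).card = 1 := by omega
    exact card_eq_one.mp this
  obtain ⟨aC, haC⟩ := getA cAC (hA.card_eq' hC)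
  obtain ⟨aD, haD⟩ := getA cAD (hA.card_eq' hD)
  obtain ⟨aE, haE⟩ := getA cAE (hA.card_eq' hE)
  have mC : aC ∈ A \ C := haC ▸ mem_singleton_self aC
  have mD : aD ∈ A \ D := haD ▸ mem_singleton_self aD
  have mE : aE ∈ A \ E := haE ▸ mem_singleton_self aE
  have sdmem : ∀ {X Y : Finset V} {a : V}, a ∈ X \ Y → a ∈ symmDiff X Y := by
    intro X Y a h; rw [symmDiff_def, Finset.sup_eq_union]; exact mem_union_left _ h
  have sdmem' : ∀ {X Y : Finset V} {a : V}, a ∈ X \ Y → a ∈ symmDiff Y X := by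
    intro X Y a h; rw [symmDiff_comm]; exact sdmem h
  have neCDa : aC ≠ aD := fun h =>
    Finset.disjoint_left.mp dCD (sdmem' mC) (by rw [h]; exact sdmem mD)
  have neCEa : aC ≠ aE := fun h =>
    Finset.disjoint_left.mp dCE (sdmem' mC) (by rw [h]; exact sdmem mE)
  have neDEa : aD ≠ aE := fun h =>
    Finset.disjoint_left.mp dDE (sdmem' mD) (by rw [h]; exact sdmem mE)
  have inAB : ∀ {a : V} {X : Finset V}, a ∈ A \ X →
      symmDiff A B = symmDiff A X ∪ symmDiff X B → a ∈ A \ B := by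
    intro a X hm hu
    have h1 : a ∈ symmDiff A B := hu ▸ mem_union_left _ (sdmem hm)
    have haA : a ∈ A := (mem_sdiff.mp hm).1
    rw [Finset.mem_symmDiff] at h1
    rcases h1 with ⟨-, h⟩ | ⟨-, h⟩
    · exact mem_sdiff.mpr ⟨haA, h⟩
    · exact absurd haA h
  have iC := inAB mC uC
  have iD := inAB mD uD
  have iE := inAB mE uE
  have hsub : ({aC, aD, aE} : Finset V) ⊆ A \ B := by
    intro x hx
    simp only [mem_insert, mem_singleton] at hx
    rcases hx with rfl | rfl | rfl <;> assumption
  have h3 : ({aC, aD, aE} : Finset V).card = 3 := by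
    rw [card_insert_of_notMem (by simp [neCDa, neCEa]),
      card_insert_of_notMem (by simp [neDEa]), card_singleton]
  have := card_le_card hsub
  omega

end Aux

/-- No graph has `K_{2,3}` as its `i`-graph. -/
theorem K23_not_iGraph :
    ∀ (V : Type) [Fintype V] [DecidableEq V] (G : SimpleGraph V),
      IsEmpty (iGraph G ≃g completeBipartiteGraph (Fin 2) (Fin 3)) := by
  intro V _ _ G
  constructor
  intro f
  have hadj : ∀ (x y : Fin 2 ⊕ Fin 3), (completeBipartiteGraph (Fin 2) (Fin 3)).Adj x y →
      (iGraph G).Adj (f.symm x) (f.symm y) := fun x y h => f.symm.map_adj_iff.mpr h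
  have hnadj : ∀ (x y : Fin 2 ⊕ Fin 3), ¬ (completeBipartiteGraph (Fin 2) (Fin 3)).Adj x y →
      ¬ (iGraph G).Adj (f.symm x) (f.symm y) := fun x y h hc => h (f.symm.map_adj_iff.mp hc)
  have hne : ∀ (x y : Fin 2 ⊕ Fin 3), x ≠ y → (f.symm x).1 ≠ (f.symm y).1 := by
    intro x y h hc
    exact h (f.symm.toEquiv.injective (Subtype.ext hc))
  exact core G (f.symm (.inl 0)).2 (f.symm (.inl 1)).2 (f.symm (.inr 0)).2
    (f.symm (.inr 1)).2 (f.symm (.inr 2)).2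
    (hne _ _ (by simp)) (hne _ _ (by simp)) (hne _ _ (by simp)) (hne _ _ (by simp))
    (hnadj (.inl 0) (.inl 1) (by simp [completeBipartiteGraph]))
    (hnadj (.inr 0) (.inr 1) (by simp [completeBipartiteGraph]))
    (hnadj (.inr 0) (.inr 2) (by simp [completeBipartiteGraph]))
    (hnadj (.inr 1) (.inr 2) (by simp [completeBipartiteGraph]))
    (hadj (.inl 0) (.inr 0) (by simp [completeBipartiteGraph]))
    (hadj (.inl 0) (.inr 1) (by simp [completeBipartiteGraph]))
    (hadj (.inl 0) (.inr 2) (by simp [completeBipartiteGraph]))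
    (hadj (.inl 1) (.inr 0) (by simp [completeBipartiteGraph]))
    (hadj (.inl 1) (.inr 1) (by simp [completeBipartiteGraph]))
    (hadj (.inl 1) (.inr 2) (by simp [completeBipartiteGraph]))
end

section
/- There is no graph G whose i-graph is isomorphic to the graph κ obtained from K_{2,3} by subdividing one edge (the theta graph Θ(2,2,3)). -/
open Finset

variable {V : Type*}

/-- The graph `κ = Θ(2,2,3)`: `K_{2,3}` with one edge subdivided.  Here `0 = X`, `1 = Y`,
`2 = A`, `3 = B`, `4 = C₁`, `5 = C₂`, with paths `0-2-1`, `0-3-1` and `0-4-5-1`. -/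
def kappaGraph : SimpleGraph (Fin 6) :=
  SimpleGraph.fromEdgeSet {s(0,2), s(2,1), s(0,3), s(3,1), s(0,4), s(4,5), s(5,1)}

section Aux
variable [DecidableEq V] {G : SimpleGraph V}

lemma sd_trans (a b c : Finset V) :
    symmDiff a c = symmDiff (symmDiff a b) (symmDiff b c) := by
  ext x; simp only [Finset.mem_symmDiff]; tauto

lemma mem_transfer {S T P : Finset V} {x : V} (h : symmDiff S T = P) (hx : x ∉ P) :
    x ∈ S ↔ x ∈ T := by
  have hns : x ∉ symmDiff S T := h ▸ hx
  rw [Finset.mem_symmDiff] at hns; tauto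

lemma sd_pair {a b c : V} (hab : a ≠ b) (hac : a ≠ c) (hbc : b ≠ c) :
    symmDiff ({a, b} : Finset V) {a, c} = {b, c} := by
  ext x
  simp only [Finset.mem_symmDiff, Finset.mem_insert, Finset.mem_singleton]
  constructor
  · rintro (⟨h1 | h1, h2⟩ | ⟨h1 | h1, h2⟩) <;> subst h1 <;> tauto
  · rintro (rfl | rfl)
    · exact Or.inl ⟨Or.inr rfl, by push_neg; exact ⟨hab.symm, hbc⟩⟩
    · exact Or.inr ⟨Or.inr rfl, by push_neg; exact ⟨hac.symm, hbc.symm⟩⟩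

lemma orient {S T : Finset V} (hc : S.card = T.card) {w z : V} (hwz : w ≠ z)
    (hsd : symmDiff S T = {w, z}) :
    (w ∈ S ∧ w ∉ T ∧ z ∈ T ∧ z ∉ S) ∨ (w ∈ T ∧ w ∉ S ∧ z ∈ S ∧ z ∉ T) := by
  have hss : (S \ T).card = (T \ S).card := Finset.card_sdiff_comm hc
  have hw : w ∈ S ∧ w ∉ T ∨ w ∈ T ∧ w ∉ S := by
    rw [← Finset.mem_symmDiff, hsd]; simp
  have hz : z ∈ S ∧ z ∉ T ∨ z ∈ T ∧ z ∉ S := by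
    rw [← Finset.mem_symmDiff, hsd]; simp
  rcases hw with ⟨hwS, hwT⟩ | ⟨hwT, hwS⟩ <;> rcases hz with ⟨hzS, hzT⟩ | ⟨hzT, hzS⟩
  · exfalso
    have hTS : T \ S = ∅ := by
      refine Finset.eq_empty_iff_forall_notMem.mpr fun a ha => ?_
      rw [Finset.mem_sdiff] at ha
      have hm : a ∈ symmDiff S T := Finset.mem_symmDiff.mpr (Or.inr ⟨ha.1, ha.2⟩)
      rw [hsd] at hm
      simp only [Finset.mem_insert, Finset.mem_singleton] at hm
      rcases hm with rfl | rfl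
      · exact hwT ha.1
      · exact hzT ha.1
    have h0 : (S \ T).card = 0 := by rw [hss, hTS, Finset.card_empty]
    have hw' : w ∈ S \ T := Finset.mem_sdiff.mpr ⟨hwS, hwT⟩
    rw [Finset.card_eq_zero] at h0
    rw [h0] at hw'
    exact absurd hw' (Finset.notMem_empty w)
  · exact Or.inl ⟨hwS, hwT, hzT, hzS⟩
  · exact Or.inr ⟨hwT, hwS, hzS, hzT⟩
  · exfalso
    have hTS : S \ T = ∅ := by
      refine Finset.eq_empty_iff_forall_notMem.mpr fun a ha => ?_
      rw [Finset.mem_sdiff] at ha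
      have hm : a ∈ symmDiff S T := Finset.mem_symmDiff.mpr (Or.inl ⟨ha.1, ha.2⟩)
      rw [hsd] at hm
      simp only [Finset.mem_insert, Finset.mem_singleton] at hm
      rcases hm with rfl | rfl
      · exact hwS ha.1
      · exact hzS ha.1
    have h0 : (T \ S).card = 0 := by rw [← hss, hTS, Finset.card_empty]
    have hw' : w ∈ T \ S := Finset.mem_sdiff.mpr ⟨hwT, hwS⟩
    rw [Finset.card_eq_zero] at h0
    rw [h0] at hw'
    exact absurd hw' (Finset.notMem_empty w)

lemma iset_card_eq {S T : Finset V} (hS : IsISet G S) (hT : IsISet G T) :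
    S.card = T.card := hS.2.trans hT.2.symm

lemma key_adj {S T : Finset V} {w z : V} (hS : IndepDom G S) (hT : IndepDom G T)
    (hsd : symmDiff S T = {w, z}) (hwS : w ∈ S) (hzT : z ∈ T) (hzS : z ∉ S) :
    G.Adj w z := by
  obtain ⟨u, huS, hadj⟩ := hS.2 z hzS
  rcases eq_or_ne u w with rfl | hu
  · exact hadj
  · have huT : u ∈ T := by
      by_contra h
      have hm : u ∈ symmDiff S T := Finset.mem_symmDiff.mpr (Or.inl ⟨huS, h⟩)
      rw [hsd] at hm
      simp only [Finset.mem_insert, Finset.mem_singleton] at hm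
      rcases hm with rfl | rfl
      · exact hu rfl
      · exact hzS huS
    exact absurd hadj (hT.1 huT hzT)

/-- Two `i`-sets whose symmetric difference has exactly two elements are adjacent in the
`i`-graph. -/
lemma lemC (X Y : {S : Finset V // IsISet G S}) (h2 : (symmDiff X.1 Y.1).card = 2) :
    (iGraph G).Adj X Y := by
  obtain ⟨w, z, hwz, hsd⟩ := Finset.card_eq_two.mp h2
  rcases orient (iset_card_eq X.2 Y.2) hwz hsd with ⟨h1, h2', h3, h4⟩ | ⟨h1, h2', h3, h4⟩
  · exact ⟨w, z, key_adj X.2.1 Y.2.1 hsd h1 h3 h4, hsd⟩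
  · have hsd' : symmDiff Y.1 X.1 = {w, z} := by rw [symmDiff_comm]; exact hsd
    exact ⟨w, z, key_adj Y.2.1 X.2.1 hsd' h1 h3 h4, hsd⟩

/-- Structure of an edge of the `i`-graph: an oriented swap. -/
lemma adjStruct {X Y : {S : Finset V // IsISet G S}} (h : (iGraph G).Adj X Y) :
    ∃ x y, G.Adj x y ∧ symmDiff X.1 Y.1 = {x, y} ∧
      x ∈ X.1 ∧ x ∉ Y.1 ∧ y ∈ Y.1 ∧ y ∉ X.1 := by
  obtain ⟨x, y, hxy, hsd⟩ := h
  rcases orient (iset_card_eq X.2 Y.2) hxy.ne hsd with ⟨h1, h2, h3, h4⟩ | ⟨h1, h2, h3, h4⟩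
  · exact ⟨x, y, hxy, hsd, h1, h2, h3, h4⟩
  · exact ⟨y, x, hxy.symm, hsd.trans (Finset.pair_comm x y), h3, h4, h1, h2⟩

/-- If `C` and `W` are both `i`-graph neighbours of `X`, with swap pairs `(u,v)` and `(a,b)`
respectively, and `C` and `W` are distinct and non-adjacent, then `u ≠ a` and `v ≠ b`. -/
lemma no_overlap (X C W : {S : Finset V // IsISet G S}) {u v a b : V}
    (hsdC : symmDiff X.1 C.1 = {u, v}) (hsdW : symmDiff X.1 W.1 = {a, b})
    (huv : u ≠ v) (hab : a ≠ b)
    (hCW : ¬ (iGraph G).Adj C W) (hCWne : C ≠ W) : u ≠ a ∧ v ≠ b := by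
  have hsd : symmDiff C.1 W.1 = symmDiff ({u, v} : Finset V) {a, b} := by
    rw [sd_trans C.1 X.1 W.1, symmDiff_comm C.1 X.1, hsdC, hsdW]
  constructor
  · rintro rfl
    by_cases hvb : v = b
    · subst hvb
      rw [symmDiff_self] at hsd
      exact hCWne (Subtype.ext (symmDiff_eq_bot.mp (by rw [hsd])))
    · have h2 : symmDiff C.1 W.1 = {v, b} := by rw [hsd, sd_pair huv hab hvb]
      exact hCW (lemC C W (by rw [h2]; exact Finset.card_pair hvb))
  · rintro rfl
    by_cases hua : u = a
    · subst hua
      rw [symmDiff_self] at hsd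
      exact hCWne (Subtype.ext (symmDiff_eq_bot.mp (by rw [hsd])))
    · have h2 : symmDiff C.1 W.1 = {u, a} := by
        rw [hsd, Finset.pair_comm u v, Finset.pair_comm a v,
          sd_pair huv.symm hab.symm hua]
      exact hCW (lemC C W (by rw [h2]; exact Finset.card_pair hua))

/-- Structure of a path `X - P - Y` in the `i`-graph where `X` and `Y` are distinct and
non-adjacent: the two swaps use four pairwise distinct vertices. -/
lemma path2 (X P Y : {S : Finset V // IsISet G S})
    (hXP : (iGraph G).Adj X P) (hPY : (iGraph G).Adj P Y)
    (hXY : ¬ (iGraph G).Adj X Y) (hXYne : X ≠ Y) :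
    ∃ p q r s : V,
      symmDiff X.1 P.1 = {p, q} ∧ symmDiff P.1 Y.1 = {r, s} ∧
      p ∈ X.1 ∧ p ∉ P.1 ∧ p ∉ Y.1 ∧ q ∈ P.1 ∧ q ∉ X.1 ∧ q ∈ Y.1 ∧
      r ∈ P.1 ∧ r ∈ X.1 ∧ r ∉ Y.1 ∧ s ∈ Y.1 ∧ s ∉ P.1 ∧ s ∉ X.1 ∧
      p ≠ q ∧ p ≠ r ∧ p ≠ s ∧ q ≠ r ∧ q ≠ s ∧ r ≠ s := by
  obtain ⟨p, q, hpqE, hsdXP, hpX, hpP, hqP, hqX⟩ := adjStruct hXP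
  obtain ⟨r, s, hrsE, hsdPY, hrP, hrY, hsY, hsP⟩ := adjStruct hPY
  have hXYne' : X.1 ≠ Y.1 := fun h => hXYne (Subtype.ext h)
  have hsdXY : symmDiff X.1 Y.1 = symmDiff ({p, q} : Finset V) {r, s} := by
    rw [sd_trans X.1 P.1 Y.1, hsdXP, hsdPY]
  have hpq : p ≠ q := fun h => hpP (h ▸ hqP)
  have hpr : p ≠ r := fun h => hpP (h ▸ hrP)
  have hqs : q ≠ s := fun h => hsP (h ▸ hqP)
  have hrs : r ≠ s := fun h => hsP (h ▸ hrP)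
  have hqr : q ≠ r := by
    rintro rfl
    by_cases hps : p = s
    · subst hps
      apply hXYne'
      apply symmDiff_eq_bot.mp
      rw [hsdXY, Finset.pair_comm q p, symmDiff_self]
    · have h2 : symmDiff X.1 Y.1 = {p, s} := by
        rw [hsdXY, Finset.pair_comm p q, sd_pair hpq.symm hqs hps]
      exact hXY (lemC X Y (by rw [h2]; exact Finset.card_pair hps))
  have hps : p ≠ s := by
    rintro rfl
    have h2 : symmDiff X.1 Y.1 = {q, r} := by
      rw [hsdXY, Finset.pair_comm r p, sd_pair hpq hpr hqr]
    exact hXY (lemC X Y (by rw [h2]; exact Finset.card_pair hqr))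
  -- membership of the four vertices in X and Y
  have hpqm : p ∉ ({r, s} : Finset V) := by simp [hpr, hps]
  have hpXY : p ∈ symmDiff X.1 Y.1 := by
    rw [hsdXY, Finset.mem_symmDiff]
    exact Or.inl ⟨by simp, hpqm⟩
  have hpY : p ∉ Y.1 := by
    rw [Finset.mem_symmDiff] at hpXY; tauto
  have hqXY : q ∈ symmDiff X.1 Y.1 := by
    rw [hsdXY, Finset.mem_symmDiff]
    exact Or.inl ⟨by simp, by simp [hqr, hqs]⟩
  have hqY : q ∈ Y.1 := by
    rw [Finset.mem_symmDiff] at hqXY; tauto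
  have hrXY : r ∈ symmDiff X.1 Y.1 := by
    rw [hsdXY, Finset.mem_symmDiff]
    exact Or.inr ⟨by simp, by simp [hpr.symm, hqr.symm]⟩
  have hrX : r ∈ X.1 := by
    rw [Finset.mem_symmDiff] at hrXY; tauto
  have hsXY : s ∈ symmDiff X.1 Y.1 := by
    rw [hsdXY, Finset.mem_symmDiff]
    exact Or.inr ⟨by simp, by simp [hps.symm, hqs.symm]⟩
  have hsX : s ∉ X.1 := by
    rw [Finset.mem_symmDiff] at hsXY; tauto
  exact ⟨p, q, r, s, hsdXP, hsdPY, hpX, hpP, hpY, hqP, hqX, hqY,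
    hrP, hrX, hrY, hsY, hsP, hsX, hpq, hpr, hps, hqr, hqs, hrs⟩

/-- The core combinatorial contradiction: the `i`-graph cannot contain six `i`-sets with the
adjacency pattern of `Θ(2,2,3)`. -/
lemma core_s8 (X Y A B C1 C2 : {S : Finset V // IsISet G S})
    (hXA : (iGraph G).Adj X A) (hAY : (iGraph G).Adj A Y)
    (hXB : (iGraph G).Adj X B) (hBY : (iGraph G).Adj B Y)
    (hXC : (iGraph G).Adj X C1) (hCC : (iGraph G).Adj C1 C2)
    (hCY : (iGraph G).Adj C2 Y)
    (hXY : ¬ (iGraph G).Adj X Y) (hAB : ¬ (iGraph G).Adj A B)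
    (hC1A : ¬ (iGraph G).Adj C1 A) (hC1B : ¬ (iGraph G).Adj C1 B)
    (hABne : A ≠ B) (hC1Ane : C1 ≠ A) (hC1Bne : C1 ≠ B) (hXYne : X ≠ Y) : False := by
  obtain ⟨p, q, r, s, hsdXA, hsdAY, hpX, hpA, hpY, hqA, hqX, hqY,
    hrA, hrX, hrY, hsY, hsA, hsX, hpq, hpr, hps, hqr, hqs, hrs⟩ :=
    path2 X A Y hXA hAY hXY hXYne
  obtain ⟨p', q', r', s', hsdXB, hsdBY, hp'X, hp'B, hp'Y, hq'B, hq'X, hq'Y,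
    hr'B, hr'X, hr'Y, hs'Y, hs'B, hs'X, hp'q', hp'r', hp's', hq'r', hq's', hr's'⟩ :=
    path2 X B Y hXB hBY hXY hXYne
  -- characterise X \ Y and Y \ X
  have hsdXY : symmDiff X.1 Y.1 = symmDiff ({p, q} : Finset V) {r, s} := by
    rw [sd_trans X.1 A.1 Y.1, hsdXA, hsdAY]
  have hXmY : ∀ x, x ∈ X.1 → x ∉ Y.1 → x = p ∨ x = r := by
    intro x hx hxy
    have hm : x ∈ symmDiff X.1 Y.1 := Finset.mem_symmDiff.mpr (Or.inl ⟨hx, hxy⟩)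
    rw [hsdXY, Finset.mem_symmDiff] at hm
    simp only [Finset.mem_insert, Finset.mem_singleton] at hm
    rcases hm with ⟨rfl | rfl, _⟩ | ⟨rfl | rfl, _⟩
    · exact Or.inl rfl
    · exact absurd hx hqX
    · exact Or.inr rfl
    · exact absurd hx hsX
  have hYmX : ∀ x, x ∈ Y.1 → x ∉ X.1 → x = q ∨ x = s := by
    intro x hx hxy
    have hm : x ∈ symmDiff X.1 Y.1 := Finset.mem_symmDiff.mpr (Or.inr ⟨hx, hxy⟩)
    rw [hsdXY, Finset.mem_symmDiff] at hm
    simp only [Finset.mem_insert, Finset.mem_singleton] at hm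
    rcases hm with ⟨rfl | rfl, _⟩ | ⟨rfl | rfl, _⟩
    · exact absurd hx hpY
    · exact Or.inl rfl
    · exact absurd hx hrY
    · exact Or.inr rfl
  -- the swap pair of B must be (r, s)
  obtain ⟨hp'p, hq'q⟩ := no_overlap X B A hsdXB hsdXA hp'q' hpq
    (fun h => hAB h.symm) hABne.symm
  have hp'r : p' = r := by
    rcases hXmY p' hp'X hp'Y with h | h
    · exact absurd h hp'p
    · exact h
  have hq's : q' = s := by
    rcases hYmX q' hq'Y hq'X with h | h
    · exact absurd h hq'q
    · exact h
  rw [hp'r, hq's] at hsdXB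
  -- the swap pair (u, v) of C1 avoids p, q, r, s
  obtain ⟨u, v, huvE, hsdXC, huX, huC, hvC, hvX⟩ := adjStruct hXC
  obtain ⟨hup, hvq⟩ := no_overlap X C1 A hsdXC hsdXA huvE.ne hpq hC1A hC1Ane
  obtain ⟨hur, hvs⟩ := no_overlap X C1 B hsdXC hsdXB huvE.ne hrs hC1B hC1Bne
  -- memberships for the final count
  have huY : u ∈ Y.1 := by
    by_contra h
    rcases hXmY u huX h with rfl | rfl
    · exact hup rfl
    · exact hur rfl
  have hvY : v ∉ Y.1 := by
    intro h
    rcases hYmX v h hvX with rfl | rfl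
    · exact hvq rfl
    · exact hvs rfl
  have hpC : p ∈ C1.1 := by
    refine (mem_transfer hsdXC ?_).mp hpX
    simp only [Finset.mem_insert, Finset.mem_singleton]
    push_neg
    exact ⟨Ne.symm hup, fun h => hvX (h ▸ hpX)⟩
  have hrC : r ∈ C1.1 := by
    refine (mem_transfer hsdXC ?_).mp hrX
    simp only [Finset.mem_insert, Finset.mem_singleton]
    push_neg
    exact ⟨Ne.symm hur, fun h => hvX (h ▸ hrX)⟩
  have hqC : q ∉ C1.1 := by
    intro h
    apply hqX
    refine (mem_transfer hsdXC ?_).mpr h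
    simp only [Finset.mem_insert, Finset.mem_singleton]
    push_neg
    exact ⟨fun h' => hqX (h' ▸ huX), Ne.symm hvq⟩
  -- the five-element set inside symmDiff C1 Y
  have hsub : ({u, v, p, r, q} : Finset V) ⊆ symmDiff C1.1 Y.1 := by
    intro x hx
    simp only [Finset.mem_insert, Finset.mem_singleton] at hx
    rcases hx with rfl | rfl | rfl | rfl | rfl
    · exact Finset.mem_symmDiff.mpr (Or.inr ⟨huY, huC⟩)
    · exact Finset.mem_symmDiff.mpr (Or.inl ⟨hvC, hvY⟩)
    · exact Finset.mem_symmDiff.mpr (Or.inl ⟨hpC, hpY⟩)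
    · exact Finset.mem_symmDiff.mpr (Or.inl ⟨hrC, hrY⟩)
    · exact Finset.mem_symmDiff.mpr (Or.inr ⟨hqY, hqC⟩)
  have hcard5 : ({u, v, p, r, q} : Finset V).card = 5 := by
    have huv : u ≠ v := huvE.ne
    have huq : u ≠ q := fun h => hqX (h ▸ huX)
    have hvp : v ≠ p := fun h => hvX (h ▸ hpX)
    have hvr : v ≠ r := fun h => hvX (h ▸ hrX)
    rw [Finset.card_insert_of_notMem (by simp [huv, hup, hur, huq]),
      Finset.card_insert_of_notMem (by simp [hvp, hvr, hvq]),
      Finset.card_insert_of_notMem (by simp [hpr, hpq]),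
      Finset.card_insert_of_notMem (by simp [Ne.symm hqr]),
      Finset.card_singleton]
  -- but symmDiff C1 Y has at most four elements
  obtain ⟨c, d, _, hsd1, _⟩ := adjStruct hCC
  obtain ⟨e', f', _, hsd2, _⟩ := adjStruct hCY
  have hsdCY : symmDiff C1.1 Y.1 = symmDiff ({c, d} : Finset V) {e', f'} := by
    rw [sd_trans C1.1 C2.1 Y.1, hsd1, hsd2]
  have hle : (symmDiff C1.1 Y.1).card ≤ 4 := by
    rw [hsdCY]
    calc (symmDiff ({c, d} : Finset V) {e', f'}).card
        ≤ (({c, d} : Finset V) ∪ {e', f'}).card :=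
          Finset.card_le_card (by simpa [Finset.sup_eq_union] using
            (symmDiff_le_sup : symmDiff ({c, d} : Finset V) {e', f'} ≤ _))
      _ ≤ ({c, d} : Finset V).card + ({e', f'} : Finset V).card := Finset.card_union_le _ _
      _ ≤ 2 + 2 := by
          gcongr <;> exact (Finset.card_insert_le _ _).trans (by simp)
      _ = 4 := rfl
  have := Finset.card_le_card hsub
  rw [hcard5] at this
  omega

end Aux

/-- No graph has `κ = Θ(2,2,3)` as its `i`-graph. -/
theorem kappa_not_iGraph :
    ∀ (V : Type) [Fintype V] [DecidableEq V] (G : SimpleGraph V),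
      IsEmpty (iGraph G ≃g kappaGraph) := by
  intro V _ _ G
  constructor
  intro e
  set f := e.symm with hf
  have hAdj : ∀ i j : Fin 6, (iGraph G).Adj (f i) (f j) ↔ kappaGraph.Adj i j :=
    fun i j => f.map_adj_iff
  have hk : ∀ i j : Fin 6, kappaGraph.Adj i j ↔
      (s(i, j) ∈ ({s(0,2), s(2,1), s(0,3), s(3,1), s(0,4), s(4,5), s(5,1)} :
        Set (Sym2 (Fin 6))) ∧ i ≠ j) := fun i j => SimpleGraph.fromEdgeSet_adj _
  have hne : ∀ i j : Fin 6, i ≠ j → f i ≠ f j := fun i j h hc => h (f.injective hc)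
  refine core_s8 (f 0) (f 1) (f 2) (f 3) (f 4) (f 5) ?_ ?_ ?_ ?_ ?_ ?_ ?_ ?_ ?_ ?_ ?_
    (hne 2 3 (by decide)) (hne 4 2 (by decide)) (hne 4 3 (by decide)) (hne 0 1 (by decide))
  · exact (hAdj 0 2).mpr (by rw [hk]; refine ⟨by simp, by decide⟩)
  · exact (hAdj 2 1).mpr (by rw [hk]; refine ⟨by simp, by decide⟩)
  · exact (hAdj 0 3).mpr (by rw [hk]; refine ⟨by simp, by decide⟩)
  · exact (hAdj 3 1).mpr (by rw [hk]; refine ⟨by simp, by decide⟩)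
  · exact (hAdj 0 4).mpr (by rw [hk]; refine ⟨by simp, by decide⟩)
  · exact (hAdj 4 5).mpr (by rw [hk]; refine ⟨by simp, by decide⟩)
  · exact (hAdj 5 1).mpr (by rw [hk]; refine ⟨by simp, by decide⟩)
  · rw [hAdj, hk]
    rintro ⟨hm, -⟩
    simp only [Set.mem_insert_iff, Set.mem_singleton_iff, Sym2.eq_iff] at hm
    exact absurd hm (by decide)
  · rw [hAdj, hk]
    rintro ⟨hm, -⟩
    simp only [Set.mem_insert_iff, Set.mem_singleton_iff, Sym2.eq_iff] at hm
    exact absurd hm (by decide)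
  · rw [hAdj, hk]
    rintro ⟨hm, -⟩
    simp only [Set.mem_insert_iff, Set.mem_singleton_iff, Sym2.eq_iff] at hm
    exact absurd hm (by decide)
  · rw [hAdj, hk]
    rintro ⟨hm, -⟩
    simp only [Set.mem_insert_iff, Set.mem_singleton_iff, Sym2.eq_iff] at hm
    exact absurd hm (by decide)
end

section
/- If ℐ(G₁) ≅ H₁ and ℐ(G₂) ≅ H₂, then the i-graph of the disjoint union G₁ ∪ G₂ is isomorphic to the Cartesian product H₁ □ H₂. -/
open Finset

variable {V : Type*}

section aux
open Sum

lemma exists_indepDom [Fintype V] (G : SimpleGraph V) : ∃ S, IndepDom G S := by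
  classical
  obtain ⟨S, hS, hmax⟩ := Finset.exists_max_image
    ((Finset.univ : Finset (Finset V)).filter
      (fun S => ∀ ⦃x⦄, x ∈ S → ∀ ⦃y⦄, y ∈ S → ¬ G.Adj x y)) Finset.card
    ⟨∅, by simp⟩
  simp only [Finset.mem_filter, Finset.mem_univ, true_and] at hS hmax
  refine ⟨S, hS, fun v hv => ?_⟩
  by_contra h
  push_neg at h
  have hind : ∀ ⦃x⦄, x ∈ insert v S → ∀ ⦃y⦄, y ∈ insert v S → ¬ G.Adj x y := by
    intro x hx y hy
    rcases Finset.mem_insert.1 hx with rfl | hx'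
    · rcases Finset.mem_insert.1 hy with rfl | hy'
      · exact G.loopless.irrefl _
      · exact fun hadj => h y hy' hadj.symm
    · rcases Finset.mem_insert.1 hy with rfl | hy'
      · exact fun hadj => h x hx' hadj
      · exact hS hx' hy' 
  have := hmax _ hind
  rw [Finset.card_insert_of_notMem hv] at this
  omega

lemma toLeft_symmDiff {α β : Type*} [DecidableEq α] [DecidableEq β]
    (S T : Finset (α ⊕ β)) : (symmDiff S T).toLeft = symmDiff S.toLeft T.toLeft := by
  ext x; simp [Finset.mem_symmDiff]

lemma toRight_symmDiff {α β : Type*} [DecidableEq α] [DecidableEq β]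
    (S T : Finset (α ⊕ β)) : (symmDiff S T).toRight = symmDiff S.toRight T.toRight := by
  ext x; simp [Finset.mem_symmDiff]

variable {V₁ V₂ : Type*} {G₁ : SimpleGraph V₁} {G₂ : SimpleGraph V₂}

lemma indepDom_sum {S : Finset (V₁ ⊕ V₂)} :
    IndepDom (G₁ ⊕g G₂) S ↔ IndepDom G₁ S.toLeft ∧ IndepDom G₂ S.toRight := by
  constructor
  · rintro ⟨hi, hd⟩
    refine ⟨⟨fun x hx y hy hadj => ?_, fun v hv => ?_⟩,
            ⟨fun x hx y hy hadj => ?_, fun v hv => ?_⟩⟩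
    · exact hi (Finset.mem_toLeft.1 hx) (Finset.mem_toLeft.1 hy) hadj
    · obtain ⟨u, hu, hadj⟩ := hd (inl v) (by simpa using hv)
      cases u with
      | inl u => exact ⟨u, Finset.mem_toLeft.2 hu, hadj⟩
      | inr u => exact absurd hadj (by simp [SimpleGraph.sum_adj])
    · exact hi (Finset.mem_toRight.1 hx) (Finset.mem_toRight.1 hy) hadj
    · obtain ⟨u, hu, hadj⟩ := hd (inr v) (by simpa using hv)
      cases u with
      | inl u => exact absurd hadj (by simp [SimpleGraph.sum_adj])
      | inr u => exact ⟨u, Finset.mem_toRight.2 hu, hadj⟩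
  · rintro ⟨⟨hi₁, hd₁⟩, hi₂, hd₂⟩
    refine ⟨fun x hx y hy hadj => ?_, fun v hv => ?_⟩
    · cases x <;> cases y <;> simp only [SimpleGraph.sum] at hadj
      · exact hi₁ (Finset.mem_toLeft.2 hx) (Finset.mem_toLeft.2 hy) hadj
      · exact Bool.false_ne_true hadj
      · exact Bool.false_ne_true hadj
      · exact hi₂ (Finset.mem_toRight.2 hx) (Finset.mem_toRight.2 hy) hadj
    · cases v with
      | inl v =>
        obtain ⟨u, hu, hadj⟩ := hd₁ v (by simpa using hv)
        exact ⟨inl u, Finset.mem_toLeft.1 hu, hadj⟩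
      | inr v =>
        obtain ⟨u, hu, hadj⟩ := hd₂ v (by simpa using hv)
        exact ⟨inr u, Finset.mem_toRight.1 hu, hadj⟩

end aux

section aux2
open Sum
variable {V₁ V₂ : Type*} [Fintype V₁] [Fintype V₂] {G₁ : SimpleGraph V₁} {G₂ : SimpleGraph V₂}

lemma iNum_nonempty (G : SimpleGraph V) [Fintype V] :
    {n | ∃ S : Finset V, IndepDom G S ∧ S.card = n}.Nonempty := by
  obtain ⟨S, hS⟩ := exists_indepDom G
  exact ⟨S.card, S, hS, rfl⟩

lemma iNum_le {G : SimpleGraph V} {S : Finset V} (hS : IndepDom G S) : iNum G ≤ S.card :=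
  Nat.sInf_le ⟨S, hS, rfl⟩

lemma iNum_sum : iNum (G₁ ⊕g G₂) = iNum G₁ + iNum G₂ := by
  apply le_antisymm
  · obtain ⟨S₁, hS₁, hc₁⟩ := Nat.sInf_mem (iNum_nonempty G₁)
    obtain ⟨S₂, hS₂, hc₂⟩ := Nat.sInf_mem (iNum_nonempty G₂)
    have : IndepDom (G₁ ⊕g G₂) (S₁.disjSum S₂) := by
      rw [indepDom_sum, Finset.toLeft_disjSum, Finset.toRight_disjSum]
      exact ⟨hS₁, hS₂⟩
    calc iNum (G₁ ⊕g G₂) ≤ (S₁.disjSum S₂).card := iNum_le this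
      _ = iNum G₁ + iNum G₂ := by rw [Finset.card_disjSum, hc₁, hc₂]; rfl
  · obtain ⟨S, hS, hc⟩ := Nat.sInf_mem (iNum_nonempty (G₁ ⊕g G₂))
    rw [indepDom_sum] at hS
    calc iNum G₁ + iNum G₂ ≤ S.toLeft.card + S.toRight.card :=
          Nat.add_le_add (iNum_le hS.1) (iNum_le hS.2)
      _ = S.card := Finset.card_toLeft_add_card_toRight
      _ = iNum (G₁ ⊕g G₂) := hc

lemma isISet_sum_iff {S : Finset (V₁ ⊕ V₂)} :
    IsISet (G₁ ⊕g G₂) S ↔ IsISet G₁ S.toLeft ∧ IsISet G₂ S.toRight := by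
  constructor
  · rintro ⟨hS, hc⟩
    rw [indepDom_sum] at hS
    have h₁ := iNum_le hS.1
    have h₂ := iNum_le hS.2
    have hsum : S.toLeft.card + S.toRight.card = iNum G₁ + iNum G₂ := by
      rw [Finset.card_toLeft_add_card_toRight, hc, iNum_sum]
    exact ⟨⟨hS.1, by omega⟩, ⟨hS.2, by omega⟩⟩
  · rintro ⟨⟨h₁, hc₁⟩, h₂, hc₂⟩
    refine ⟨indepDom_sum.2 ⟨h₁, h₂⟩, ?_⟩
    rw [← Finset.card_toLeft_add_card_toRight, hc₁, hc₂, iNum_sum]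

variable [DecidableEq V₁] [DecidableEq V₂]

lemma pair_inl_eq_disjSum (a b : V₁) :
    ({inl a, inl b} : Finset (V₁ ⊕ V₂)) = ({a, b} : Finset V₁).disjSum ∅ := by
  ext x; cases x <;> simp

lemma pair_inr_eq_disjSum (a b : V₂) :
    ({inr a, inr b} : Finset (V₁ ⊕ V₂)) = (∅ : Finset V₁).disjSum {a, b} := by
  ext x; cases x <;> simp

lemma symmDiff_sum_eq (S T : Finset (V₁ ⊕ V₂)) :
    symmDiff S T = (symmDiff S.toLeft T.toLeft).disjSum (symmDiff S.toRight T.toRight) :=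
  (Finset.eq_disjSum_iff).2 ⟨toLeft_symmDiff S T, toRight_symmDiff S T⟩

lemma iGraph_sum_adj {S T : Finset (V₁ ⊕ V₂)}
    (hS : IsISet (G₁ ⊕g G₂) S) (hT : IsISet (G₁ ⊕g G₂) T) :
    (iGraph (G₁ ⊕g G₂)).Adj ⟨S, hS⟩ ⟨T, hT⟩ ↔
      ((iGraph G₁).Adj ⟨S.toLeft, (isISet_sum_iff.1 hS).1⟩ ⟨T.toLeft, (isISet_sum_iff.1 hT).1⟩
        ∧ S.toRight = T.toRight) ∨
      ((iGraph G₂).Adj ⟨S.toRight, (isISet_sum_iff.1 hS).2⟩ ⟨T.toRight, (isISet_sum_iff.1 hT).2⟩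
        ∧ S.toLeft = T.toLeft) := by
  constructor
  · rintro ⟨x, y, hxy, h⟩
    rw [symmDiff_sum_eq] at h
    cases x with
    | inl a =>
      cases y with
      | inl b =>
        rw [pair_inl_eq_disjSum, Finset.disjSum_inj] at h
        refine Or.inl ⟨⟨a, b, hxy, h.1⟩, ?_⟩
        have := h.2
        rwa [← Finset.bot_eq_empty, symmDiff_eq_bot] at this
      | inr b => exact absurd hxy (by simp [SimpleGraph.sum])
    | inr a =>
      cases y with
      | inl b => exact absurd hxy (by simp [SimpleGraph.sum])
      | inr b =>
        rw [pair_inr_eq_disjSum, Finset.disjSum_inj] at h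
        refine Or.inr ⟨⟨a, b, hxy, h.2⟩, ?_⟩
        have := h.1
        rwa [← Finset.bot_eq_empty, symmDiff_eq_bot] at this
  · rintro (⟨⟨a, b, hab, h⟩, hR⟩ | ⟨⟨a, b, hab, h⟩, hL⟩)
    · refine ⟨inl a, inl b, hab, ?_⟩
      rw [symmDiff_sum_eq, pair_inl_eq_disjSum]
      simp only [Finset.disjSum_inj]
      exact ⟨h, by rw [hR, symmDiff_self]; rfl⟩
    · refine ⟨inr a, inr b, hab, ?_⟩
      rw [symmDiff_sum_eq, pair_inr_eq_disjSum]
      simp only [Finset.disjSum_inj]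
      exact ⟨by rw [hL, symmDiff_self]; rfl, h⟩

end aux2

open SimpleGraph in
/-- If `ℐ(G₁) ≅ H₁` and `ℐ(G₂) ≅ H₂`, then `ℐ(G₁ ∪ G₂) ≅ H₁ □ H₂`. -/
theorem iGraph_disjoint_union_boxProd
    {V₁ V₂ W₁ W₂ : Type} [Fintype V₁] [DecidableEq V₁] [Fintype V₂] [DecidableEq V₂]
    (G₁ : SimpleGraph V₁) (G₂ : SimpleGraph V₂) (H₁ : SimpleGraph W₁) (H₂ : SimpleGraph W₂)
    (e₁ : iGraph G₁ ≃g H₁) (e₂ : iGraph G₂ ≃g H₂) :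
    Nonempty (iGraph (G₁ ⊕g G₂) ≃g H₁ □ H₂) := by
  let f : {S : Finset (V₁ ⊕ V₂) // IsISet (G₁ ⊕g G₂) S} ≃
      ({S : Finset V₁ // IsISet G₁ S} × {S : Finset V₂ // IsISet G₂ S}) :=
    { toFun := fun S =>
        (⟨S.1.toLeft, (isISet_sum_iff.1 S.2).1⟩, ⟨S.1.toRight, (isISet_sum_iff.1 S.2).2⟩)
      invFun := fun P => ⟨P.1.1.disjSum P.2.1, isISet_sum_iff.2 (by
        rw [Finset.toLeft_disjSum, Finset.toRight_disjSum]; exact ⟨P.1.2, P.2.2⟩)⟩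
      left_inv := fun S => Subtype.ext Finset.toLeft_disjSum_toRight
      right_inv := fun P => by
        refine Prod.ext (Subtype.ext ?_) (Subtype.ext ?_) <;> simp }
  refine ⟨⟨f.trans (e₁.toEquiv.prodCongr e₂.toEquiv), ?_⟩⟩
  rintro ⟨S, hS⟩ ⟨T, hT⟩
  simp only [Equiv.trans_apply, Equiv.prodCongr_apply, Prod.map, boxProd_adj, f]
  rw [iGraph_sum_adj hS hT]
  rw [show ⇑e₁.toEquiv = ⇑e₁ from rfl, show ⇑e₂.toEquiv = ⇑e₂ from rfl]
  rw [e₁.map_rel_iff, e₂.map_rel_iff, e₁.injective.eq_iff, e₂.injective.eq_iff,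
    Subtype.ext_iff, Subtype.ext_iff]
  exact Iff.rfl
end

section
/- Let G₁ and G₂ be graphs with i(G₁) = i(G₂) ≥ 2, and let G = G₁ ∨ G₂ be their join. Then the i-sets of G are exactly the i-sets of G₁ together with the i-sets of G₂, no i-set of G₁ is adjacent in ℐ(G) to an i-set of G₂, and ℐ(G) ≅ ℐ(G₁) ∪ ℐ(G₂) (disjoint union). -/
open Finset

variable {V : Type*}

variable {V₁ V₂ : Type*}

/-- The join `G₁ ∨ G₂`: the disjoint union together with all edges between the two parts. -/
def joinGraph (G₁ : SimpleGraph V₁) (G₂ : SimpleGraph V₂) : SimpleGraph (V₁ ⊕ V₂) where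
  Adj a b := match a, b with
    | Sum.inl a, Sum.inl b => G₁.Adj a b
    | Sum.inl _, Sum.inr _ => True
    | Sum.inr _, Sum.inl _ => True
    | Sum.inr a, Sum.inr b => G₂.Adj a b
  symm := by constructor; rintro (a | a) (b | b) h
             · exact h.symm
             · exact h
             · exact h
             · exact h.symm
  loopless := by constructor; rintro (a | a) h
                 · exact G₁.loopless.irrefl a h
                 · exact G₂.loopless.irrefl a h

section Aux

variable {G₁ : SimpleGraph V₁} {G₂ : SimpleGraph V₂}

lemma IndepDom.nonempty' [Nonempty V] {G : SimpleGraph V} {T : Finset V}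
    (h : IndepDom G T) : T.Nonempty := by
  by_contra hT
  rw [Finset.not_nonempty_iff_eq_empty] at hT
  obtain ⟨u, hu, -⟩ := h.2 (Classical.arbitrary V) (by simp [hT])
  simp [hT] at hu

lemma exists_iset {G : SimpleGraph V} (h : 1 ≤ iNum G) :
    ∃ S : Finset V, IndepDom G S ∧ S.card = iNum G := by
  have hne : {n | ∃ S : Finset V, IndepDom G S ∧ S.card = n}.Nonempty := by
    by_contra hc
    rw [Set.not_nonempty_iff_eq_empty] at hc
    simp [iNum, hc] at h
  exact Nat.sInf_mem hne

lemma indepDom_join_iff [Nonempty V₁] [Nonempty V₂] [DecidableEq V₁] [DecidableEq V₂]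
    {S : Finset (V₁ ⊕ V₂)} :
    IndepDom (joinGraph G₁ G₂) S ↔
      (∃ T : Finset V₁, IndepDom G₁ T ∧ S = T.image Sum.inl) ∨
      (∃ T : Finset V₂, IndepDom G₂ T ∧ S = T.image Sum.inr) := by
  constructor
  · rintro ⟨hind, hdom⟩
    have hSne : S.Nonempty := IndepDom.nonempty' ⟨hind, hdom⟩
    obtain ⟨w, hw⟩ := hSne
    cases w with
    | inl a =>
      -- every element of S is a left element
      have hleft : ∀ v ∈ S, ∃ c : V₁, v = Sum.inl c := by
        intro v hv
        cases v with
        | inl c => exact ⟨c, rfl⟩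
        | inr c => exact absurd trivial (hind hw hv)
      refine Or.inl ⟨S.toLeft, ⟨?_, ?_⟩, ?_⟩
      · intro x hx y hy hxy
        exact hind (Finset.mem_toLeft.mp hx) (Finset.mem_toLeft.mp hy) hxy
      · intro v hv
        obtain ⟨u, hu, hadj⟩ := hdom (Sum.inl v) (by
          intro hc
          exact hv (Finset.mem_toLeft.mpr hc))
        obtain ⟨c, rfl⟩ := hleft u hu
        exact ⟨c, Finset.mem_toLeft.mpr hu, hadj⟩
      · ext v
        simp only [Finset.mem_image, Finset.mem_toLeft]
        constructor
        · intro hv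
          obtain ⟨c, rfl⟩ := hleft v hv
          exact ⟨c, hv, rfl⟩
        · rintro ⟨c, hc, rfl⟩; exact hc
    | inr a =>
      have hright : ∀ v ∈ S, ∃ c : V₂, v = Sum.inr c := by
        intro v hv
        cases v with
        | inl c => exact absurd trivial (hind hw hv)
        | inr c => exact ⟨c, rfl⟩
      refine Or.inr ⟨S.toRight, ⟨?_, ?_⟩, ?_⟩
      · intro x hx y hy hxy
        exact hind (Finset.mem_toRight.mp hx) (Finset.mem_toRight.mp hy) hxy
      · intro v hv
        obtain ⟨u, hu, hadj⟩ := hdom (Sum.inr v) (by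
          intro hc
          exact hv (Finset.mem_toRight.mpr hc))
        obtain ⟨c, rfl⟩ := hright u hu
        exact ⟨c, Finset.mem_toRight.mpr hu, hadj⟩
      · ext v
        simp only [Finset.mem_image, Finset.mem_toRight]
        constructor
        · intro hv
          obtain ⟨c, rfl⟩ := hright v hv
          exact ⟨c, hv, rfl⟩
        · rintro ⟨c, hc, rfl⟩; exact hc
  · rintro (⟨T, hT, rfl⟩ | ⟨T, hT, rfl⟩)
    · obtain ⟨t, ht⟩ := hT.nonempty'
      refine ⟨?_, ?_⟩
      · rintro x hx y hy hxy
        simp only [Finset.mem_image] at hx hy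
        obtain ⟨a, ha, rfl⟩ := hx
        obtain ⟨b, hb, rfl⟩ := hy
        exact hT.1 ha hb hxy
      · intro v hv
        cases v with
        | inl a =>
          have ha : a ∉ T := fun hc => hv (Finset.mem_image_of_mem _ hc)
          obtain ⟨u, hu, hadj⟩ := hT.2 a ha
          exact ⟨Sum.inl u, Finset.mem_image_of_mem _ hu, hadj⟩
        | inr b => exact ⟨Sum.inl t, Finset.mem_image_of_mem _ ht, trivial⟩
    · obtain ⟨t, ht⟩ := hT.nonempty'
      refine ⟨?_, ?_⟩
      · rintro x hx y hy hxy
        simp only [Finset.mem_image] at hx hy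
        obtain ⟨a, ha, rfl⟩ := hx
        obtain ⟨b, hb, rfl⟩ := hy
        exact hT.1 ha hb hxy
      · intro v hv
        cases v with
        | inr a =>
          have ha : a ∉ T := fun hc => hv (Finset.mem_image_of_mem _ hc)
          obtain ⟨u, hu, hadj⟩ := hT.2 a ha
          exact ⟨Sum.inr u, Finset.mem_image_of_mem _ hu, hadj⟩
        | inl b => exact ⟨Sum.inr t, Finset.mem_image_of_mem _ ht, trivial⟩

lemma iNum_join [Nonempty V₁] [Nonempty V₂] [DecidableEq V₁] [DecidableEq V₂]
    (heq : iNum G₁ = iNum G₂) (h1 : 1 ≤ iNum G₁) :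
    iNum (joinGraph G₁ G₂) = iNum G₁ := by
  obtain ⟨T₁, hT₁, hc₁⟩ := exists_iset h1
  have hmem : iNum G₁ ∈ {n | ∃ S : Finset (V₁ ⊕ V₂),
      IndepDom (joinGraph G₁ G₂) S ∧ S.card = n} := by
    refine ⟨T₁.image Sum.inl, indepDom_join_iff.mpr (Or.inl ⟨T₁, hT₁, rfl⟩), ?_⟩
    rw [Finset.card_image_of_injective _ Sum.inl_injective, hc₁]
  refine le_antisymm (Nat.sInf_le hmem) ?_
  apply le_csInf ⟨_, hmem⟩
  rintro n ⟨S, hS, rfl⟩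
  rcases indepDom_join_iff.mp hS with ⟨T, hT, rfl⟩ | ⟨T, hT, rfl⟩
  · rw [Finset.card_image_of_injective _ Sum.inl_injective]
    exact Nat.sInf_le ⟨T, hT, rfl⟩
  · rw [Finset.card_image_of_injective _ Sum.inr_injective, heq]
    exact Nat.sInf_le ⟨T, hT, rfl⟩

end Aux

open SimpleGraph in
/-- If `i(G₁) = i(G₂) ≥ 2`, then the `i`-sets of `G₁ ∨ G₂` are exactly those of `G₁`
together with those of `G₂`, no `i`-set of `G₁` is adjacent to one of `G₂` in the `i`-graph,
and `ℐ(G₁ ∨ G₂) ≅ ℐ(G₁) ∪ ℐ(G₂)`. -/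
theorem iGraph_join {V₁ V₂ : Type} [Fintype V₁] [DecidableEq V₁] [Fintype V₂] [DecidableEq V₂]
    (G₁ : SimpleGraph V₁) (G₂ : SimpleGraph V₂)
    (heq : iNum G₁ = iNum G₂) (h2 : 2 ≤ iNum G₁) :
    (∀ S : Finset (V₁ ⊕ V₂),
       IsISet (joinGraph G₁ G₂) S ↔
         ((∃ T : Finset V₁, IsISet G₁ T ∧ S = T.image Sum.inl) ∨
          (∃ T : Finset V₂, IsISet G₂ T ∧ S = T.image Sum.inr))) ∧
    (∀ X Y : {S : Finset (V₁ ⊕ V₂) // IsISet (joinGraph G₁ G₂) S},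
       (∃ T : Finset V₁, IsISet G₁ T ∧ X.1 = T.image Sum.inl) →
       (∃ T : Finset V₂, IsISet G₂ T ∧ Y.1 = T.image Sum.inr) →
       ¬ (iGraph (joinGraph G₁ G₂)).Adj X Y) ∧
    Nonempty (iGraph (joinGraph G₁ G₂) ≃g (iGraph G₁ ⊕g iGraph G₂)) := by
  have h1 : 1 ≤ iNum G₁ := le_trans (by norm_num) h2
  obtain ⟨T₁, hT₁, hc₁⟩ := exists_iset h1
  obtain ⟨T₂, hT₂, hc₂⟩ := exists_iset (heq ▸ h1)
  have hV₁ : Nonempty V₁ := by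
    obtain ⟨t, ht⟩ := Finset.card_pos.mp (hc₁ ▸ h1)
    exact ⟨t⟩
  have hV₂ : Nonempty V₂ := by
    obtain ⟨t, ht⟩ := Finset.card_pos.mp (hc₂ ▸ heq ▸ h1)
    exact ⟨t⟩
  have hiNum : iNum (joinGraph G₁ G₂) = iNum G₁ := iNum_join heq h1
  -- the characterization of i-sets of the join
  have hchar : ∀ S : Finset (V₁ ⊕ V₂),
      IsISet (joinGraph G₁ G₂) S ↔
        ((∃ T : Finset V₁, IsISet G₁ T ∧ S = T.image Sum.inl) ∨
         (∃ T : Finset V₂, IsISet G₂ T ∧ S = T.image Sum.inr)) := by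
    intro S
    constructor
    · rintro ⟨hS, hcard⟩
      rcases indepDom_join_iff.mp hS with ⟨T, hT, rfl⟩ | ⟨T, hT, rfl⟩
      · refine Or.inl ⟨T, ⟨hT, ?_⟩, rfl⟩
        rw [← hiNum, ← hcard, Finset.card_image_of_injective _ Sum.inl_injective]
      · refine Or.inr ⟨T, ⟨hT, ?_⟩, rfl⟩
        rw [← heq, ← hiNum, ← hcard, Finset.card_image_of_injective _ Sum.inr_injective]
    · rintro (⟨T, ⟨hT, hTc⟩, rfl⟩ | ⟨T, ⟨hT, hTc⟩, rfl⟩)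
      · exact ⟨indepDom_join_iff.mpr (Or.inl ⟨T, hT, rfl⟩), by
          rw [Finset.card_image_of_injective _ Sum.inl_injective, hTc, hiNum]⟩
      · exact ⟨indepDom_join_iff.mpr (Or.inr ⟨T, hT, rfl⟩), by
          rw [Finset.card_image_of_injective _ Sum.inr_injective, hTc, hiNum, heq]⟩
  -- no adjacency across the two sides
  have hsep : ∀ X Y : {S : Finset (V₁ ⊕ V₂) // IsISet (joinGraph G₁ G₂) S},
      (∃ T : Finset V₁, IsISet G₁ T ∧ X.1 = T.image Sum.inl) →
      (∃ T : Finset V₂, IsISet G₂ T ∧ Y.1 = T.image Sum.inr) →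
      ¬ (iGraph (joinGraph G₁ G₂)).Adj X Y := by
    rintro X Y ⟨TX, hTX, hX⟩ ⟨TY, hTY, hY⟩ ⟨x, y, hadj, hsd⟩
    have hdisj : Disjoint X.1 Y.1 := by
      rw [hX, hY, Finset.disjoint_left]
      rintro a ha hb
      simp only [Finset.mem_image] at ha hb
      obtain ⟨c, -, rfl⟩ := ha
      obtain ⟨d, -, hdc⟩ := hb
      exact Sum.inr_ne_inl hdc
    have hcard : (symmDiff X.1 Y.1).card = X.1.card + Y.1.card := by
      rw [hdisj.symmDiff_eq_sup]
      exact Finset.card_union_of_disjoint hdisj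
    rw [hsd] at hcard
    have h4 : 4 ≤ X.1.card + Y.1.card := by
      have hx4 : X.1.card = iNum G₁ := by
        rw [hX, Finset.card_image_of_injective _ Sum.inl_injective, hTX.2]
      have hy4 : Y.1.card = iNum G₂ := by
        rw [hY, Finset.card_image_of_injective _ Sum.inr_injective, hTY.2]
      rw [hx4, hy4, ← heq]
      omega
    have hle2 : ({x, y} : Finset (V₁ ⊕ V₂)).card ≤ 2 :=
      le_trans (Finset.card_insert_le _ _) (by simp)
    omega
  refine ⟨hchar, hsep, ?_⟩
  -- the isomorphism
  let f : {T : Finset V₁ // IsISet G₁ T} ⊕ {T : Finset V₂ // IsISet G₂ T} →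
      {S : Finset (V₁ ⊕ V₂) // IsISet (joinGraph G₁ G₂) S} := fun x =>
    match x with
    | Sum.inl T => ⟨T.1.image Sum.inl, (hchar _).mpr (Or.inl ⟨T.1, T.2, rfl⟩)⟩
    | Sum.inr T => ⟨T.1.image Sum.inr, (hchar _).mpr (Or.inr ⟨T.1, T.2, rfl⟩)⟩
  have hne₁ : ∀ T : {T : Finset V₁ // IsISet G₁ T}, T.1.Nonempty := by
    intro T
    exact Finset.card_pos.mp (T.2.2 ▸ h1)
  have hbij : Function.Bijective f := by
    constructor
    · rintro (X | X) (Y | Y) hXY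
      · simp only [f, Subtype.mk.injEq] at hXY
        exact congrArg Sum.inl (Subtype.ext
          (Finset.image_injective Sum.inl_injective hXY))
      · exfalso
        simp only [f, Subtype.mk.injEq] at hXY
        obtain ⟨t, ht⟩ := hne₁ X
        have : Sum.inl t ∈ Y.1.image Sum.inr := hXY ▸ Finset.mem_image_of_mem _ ht
        simp at this
      · exfalso
        simp only [f, Subtype.mk.injEq] at hXY
        obtain ⟨t, ht⟩ := hne₁ Y
        have : Sum.inl t ∈ X.1.image Sum.inr := hXY.symm ▸ Finset.mem_image_of_mem _ ht
        simp at this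
      · simp only [f, Subtype.mk.injEq] at hXY
        exact congrArg Sum.inr (Subtype.ext
          (Finset.image_injective Sum.inr_injective hXY))
    · rintro ⟨S, hS⟩
      rcases (hchar S).mp hS with ⟨T, hT, hST⟩ | ⟨T, hT, hST⟩
      · exact ⟨Sum.inl ⟨T, hT⟩, Subtype.ext hST.symm⟩
      · exact ⟨Sum.inr ⟨T, hT⟩, Subtype.ext hST.symm⟩
  have hAdj : ∀ a b, (iGraph (joinGraph G₁ G₂)).Adj (f a) (f b) ↔
      (iGraph G₁ ⊕g iGraph G₂).Adj a b := by
    rintro (X | X) (Y | Y)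
    · -- both left
      simp only [SimpleGraph.sum_adj]
      constructor
      · rintro ⟨x, y, hadj, hsd⟩
        simp only [f] at hsd
        rw [← Finset.image_symmDiff _ _ Sum.inl_injective] at hsd
        have hx : x ∈ (symmDiff X.1 Y.1).image Sum.inl := by rw [hsd]; simp
        have hy : y ∈ (symmDiff X.1 Y.1).image Sum.inl := by rw [hsd]; simp
        simp only [Finset.mem_image] at hx hy
        obtain ⟨a, -, rfl⟩ := hx
        obtain ⟨b, -, rfl⟩ := hy
        refine ⟨a, b, hadj, ?_⟩
        apply Finset.image_injective (f := (Sum.inl : V₁ → V₁ ⊕ V₂)) Sum.inl_injective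
        rw [hsd]
        simp [Finset.image_insert]
      · rintro ⟨x, y, hadj, hsd⟩
        refine ⟨Sum.inl x, Sum.inl y, hadj, ?_⟩
        simp only [f]
        rw [← Finset.image_symmDiff _ _ Sum.inl_injective, hsd]
        simp [Finset.image_insert]
    · -- left, right : both sides false
      simp only [SimpleGraph.sum_adj]
      constructor
      · intro h
        exact absurd h (hsep _ _ ⟨X.1, X.2, rfl⟩ ⟨Y.1, Y.2, rfl⟩)
      · intro h; exact h.elim
    · -- right, left : both sides false
      simp only [SimpleGraph.sum_adj]
      constructor
      · intro h
        exact absurd h.symm (hsep _ _ ⟨Y.1, Y.2, rfl⟩ ⟨X.1, X.2, rfl⟩)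
      · intro h; exact h.elim
    · -- both right
      simp only [SimpleGraph.sum_adj]
      constructor
      · rintro ⟨x, y, hadj, hsd⟩
        simp only [f] at hsd
        rw [← Finset.image_symmDiff _ _ Sum.inr_injective] at hsd
        have hx : x ∈ (symmDiff X.1 Y.1).image Sum.inr := by rw [hsd]; simp
        have hy : y ∈ (symmDiff X.1 Y.1).image Sum.inr := by rw [hsd]; simp
        simp only [Finset.mem_image] at hx hy
        obtain ⟨a, -, rfl⟩ := hx
        obtain ⟨b, -, rfl⟩ := hy
        refine ⟨a, b, hadj, ?_⟩
        apply Finset.image_injective (f := (Sum.inr : V₂ → V₁ ⊕ V₂)) Sum.inr_injective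
        rw [hsd]
        simp [Finset.image_insert]
      · rintro ⟨x, y, hadj, hsd⟩
        refine ⟨Sum.inr x, Sum.inr y, hadj, ?_⟩
        simp only [f]
        rw [← Finset.image_symmDiff _ _ Sum.inr_injective, hsd]
        simp [Finset.image_insert]
  exact ⟨(RelIso.mk (Equiv.ofBijective f hbij) (fun {a b} => hAdj a b)).symm⟩
end
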